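/- Let A be a commutative ℝ-algebra. For all alternating multiderivations D (k-alternating), D' (k'-alternating), and D'' (k''-alternating) of A, the generalized Jacobi identity holds: (−1)^{(k−1)(k''−1)} [[D,D'],D''] + (−1)^{(k'−1)(k−1)} [[D',D''],D] + (−1)^{(k''−1)(k'−1)} [[D'',D],D'] = 0, where [.,.] is the graded bracket defined from the shuffle composition. -/

import Mathlib

/-- `D : (ℕ → A) → A` is a `k`-alternating derivation of the commutative ℝ-algebra `A`:
it depends only on the first `k` arguments, is ℝ-multilinear and alternating in them,
and satisfies the Leibniz rule in each argument. -/
structure IsAltDeriv {A : Type*} [CommRing A] [Algebra ℝ A]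
    (k : ℕ) (D : (ℕ → A) → A) : Prop where
  depends : ∀ f g : ℕ → A, (∀ i < k, f i = g i) → D f = D g
  map_add : ∀ i < k, ∀ (f : ℕ → A) (a b : A),
    D (Function.update f i (a + b))
      = D (Function.update f i a) + D (Function.update f i b)
  map_smul : ∀ i < k, ∀ (f : ℕ → A) (c : ℝ) (a : A),
    D (Function.update f i (c • a)) = c • D (Function.update f i a)
  alternating : ∀ i j, i < k → j < k → i ≠ j → ∀ f : ℕ → A, f i = f j → D f = 0
  leibniz : ∀ i < k, ∀ (f : ℕ → A) (a b : A),
    D (Function.update f i (a * b))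
      = a * D (Function.update f i b) + D (Function.update f i a) * b

/-- `σ` is increasing on the first `c` positions and on the remaining positions. -/
def IsShuffle {N : ℕ} (c : ℕ) (σ : Equiv.Perm (Fin N)) : Prop :=
  (∀ i j : Fin N, i < j → j.val < c → σ i < σ j) ∧
  (∀ i j : Fin N, i < j → c ≤ i.val → σ i < σ j)

instance {N : ℕ} (c : ℕ) (σ : Equiv.Perm (Fin N)) : Decidable (IsShuffle c σ) :=
  inferInstanceAs (Decidable ((∀ i j : Fin N, i < j → j.val < c → σ i < σ j) ∧
    (∀ i j : Fin N, i < j → c ≤ i.val → σ i < σ j)))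

/-- The shuffle composition `D ∘ D'` of a `k`-alternating derivation with a
`k'`-alternating derivation:
`(D∘D')(f₁,…,f_{k+k'−1}) = Σ_σ (−1)^{sign σ} D(D'(f_{σ(1)},…,f_{σ(k')}),
f_{σ(k'+1)},…,f_{σ(k+k'−1)})`, the sum over permutations `σ` of `{1,…,k+k'−1}` with
`σ(1) < … < σ(k')` and `σ(k'+1) < … < σ(k+k'−1)`. -/
noncomputable def altComp {A : Type*} [CommRing A] [Algebra ℝ A]
    (k k' : ℕ) (D D' : (ℕ → A) → A) : (ℕ → A) → A :=
  fun f => ∑ σ : Equiv.Perm (Fin (k + k' - 1)),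
    if IsShuffle k' σ then
      (Equiv.Perm.sign σ : ℤ) •
        D (fun t =>
          if t = 0 then
            D' (fun m => if h : m < k' ∧ m < k + k' - 1 then f (σ ⟨m, h.2⟩) else 0)
          else if h : t < k ∧ k' + t - 1 < k + k' - 1 then f (σ ⟨k' + t - 1, h.2⟩) else 0)
    else 0

/-- The graded bracket `[D,D'] = D∘D' − (−1)^{(k−1)(k'−1)} D'∘D`. -/
noncomputable def altBracket {A : Type*} [CommRing A] [Algebra ℝ A]
    (k k' : ℕ) (D D' : (ℕ → A) → A) : (ℕ → A) → A :=
  fun f => altComp k k' D D' f - ((-1 : ℤ) ^ ((k - 1) * (k' - 1))) • altComp k' k D' D f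



open Finset

namespace AltJacobi

lemma List_eq_of_perm_of_sorted {l₁ l₂ : List ℕ} (hp : l₁.Perm l₂)
    (hs₁ : l₁.Pairwise (· ≤ ·)) (hs₂ : l₂.Pairwise (· ≤ ·)) : l₁ = l₂ :=
  List.Perm.eq_of_pairwise' hs₁ hs₂ hp

lemma npow_eq {m n : ℕ} (h : m % 2 = n % 2) : ((-1:ℤ))^m = (-1)^n := by
  conv_lhs => rw [← Nat.div_add_mod m 2, pow_add, pow_mul]
  conv_rhs => rw [← Nat.div_add_mod n 2, pow_add, pow_mul]
  simp [h]

def tri (n : ℕ) : ℕ := ∑ i ∈ Finset.range n, i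

lemma tri_succ (n : ℕ) : tri (n+1) = tri n + n := Finset.sum_range_succ _ _

lemma tri_add (m n : ℕ) : tri (m + n) = tri m + tri n + m * n := by
  induction n with
  | zero => simp [tri]
  | succ n ih => rw [← Nat.add_assoc, tri_succ, ih, tri_succ]; ring

/-- `i`-th smallest element of `S` (junk `0` out of range). -/
def nth (S : Finset ℕ) (i : ℕ) : ℕ := (S.sort (· ≤ ·)).getD i 0

/-- number of elements of `S` smaller than `x`. -/
def rank (S : Finset ℕ) (x : ℕ) : ℕ := #(S.filter (· < x))

lemma nth_eq_get (S : Finset ℕ) {i : ℕ} (h : i < S.card) :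
    nth S i = (S.sort (· ≤ ·)).get ⟨i, by rwa [Finset.length_sort]⟩ := by
  rw [nth, List.getD_eq_getElem _ _ (by rwa [Finset.length_sort])]
  simp [List.get_eq_getElem]

lemma nth_mem {S : Finset ℕ} {i : ℕ} (h : i < S.card) : nth S i ∈ S := by
  rw [nth_eq_get S h, ← Finset.mem_sort (α := ℕ) (· ≤ ·)]
  exact List.get_mem _ _

lemma nth_lt_nth {S : Finset ℕ} {i j : ℕ} (hij : i < j) (hj : j < S.card) :
    nth S i < nth S j := by
  rw [nth_eq_get S (lt_trans hij hj), nth_eq_get S hj]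
  exact (Finset.sortedLT_sort S).strictMono_get (by simpa using hij)

lemma nth_injOn {S : Finset ℕ} {i j : ℕ} (hi : i < S.card) (hj : j < S.card)
    (h : nth S i = nth S j) : i = j := by
  rcases lt_trichotomy i j with h'|h'|h'
  · exact absurd h (ne_of_lt (nth_lt_nth h' hj))
  · exact h'
  · exact absurd h.symm (ne_of_lt (nth_lt_nth h' hi))

lemma mem_iff_nth {S : Finset ℕ} {x : ℕ} : x ∈ S ↔ ∃ i, i < S.card ∧ nth S i = x := by
  constructor
  · intro hx
    rw [← Finset.mem_sort (α := ℕ) (· ≤ ·), List.mem_iff_get] at hx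
    obtain ⟨⟨i, hi⟩, rfl⟩ := hx
    refine ⟨i, by simpa [Finset.length_sort] using hi, ?_⟩
    rw [nth_eq_get S (by simpa [Finset.length_sort] using hi)]
  · rintro ⟨i, hi, rfl⟩; exact nth_mem hi

lemma rank_nth {S : Finset ℕ} {i : ℕ} (h : i < S.card) : rank S (nth S i) = i := by
  have himg : S.filter (· < nth S i) = (Finset.range i).image (nth S) := by
    ext y
    simp only [Finset.mem_filter, Finset.mem_image, Finset.mem_range]
    constructor
    · rintro ⟨hy, hlt⟩
      obtain ⟨j, hj, rfl⟩ := mem_iff_nth.1 hy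
      refine ⟨j, ?_, rfl⟩
      by_contra hc
      push_neg at hc
      rcases eq_or_lt_of_le hc with rfl|h'
      · exact lt_irrefl _ hlt
      · exact absurd (nth_lt_nth h' hj) (by omega)
    · rintro ⟨j, hj, rfl⟩
      exact ⟨nth_mem (lt_trans hj h), nth_lt_nth hj h⟩
  rw [rank, himg, Finset.card_image_of_injOn, Finset.card_range]
  intro a ha b hb hab
  exact nth_injOn (lt_trans (Finset.mem_range.1 ha) h) (lt_trans (Finset.mem_range.1 hb) h) hab

lemma rank_lt_card {S : Finset ℕ} {x : ℕ} (hx : x ∈ S) : rank S x < S.card := by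
  apply Finset.card_lt_card
  rw [Finset.ssubset_iff_of_subset (Finset.filter_subset _ _)]
  exact ⟨x, hx, by simp⟩

lemma nth_rank {S : Finset ℕ} {x : ℕ} (hx : x ∈ S) : nth S (rank S x) = x := by
  obtain ⟨i, hi, rfl⟩ := mem_iff_nth.1 hx
  rw [rank_nth hi]

lemma rank_lt_rank {S : Finset ℕ} {x y : ℕ} (hx : x ∈ S) (hxy : x < y) :
    rank S x < rank S y := by
  apply Finset.card_lt_card
  constructor
  · intro z hz
    simp only [Finset.mem_filter] at hz ⊢
    exact ⟨hz.1, lt_trans hz.2 hxy⟩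
  · intro hsub
    have h2 := hsub (Finset.mem_filter.2 ⟨hx, hxy⟩)
    simp only [Finset.mem_filter] at h2
    omega

lemma rank_injOn {S : Finset ℕ} {x y : ℕ} (hx : x ∈ S) (hy : y ∈ S)
    (h : rank S x = rank S y) : x = y := by
  rcases lt_trichotomy x y with h'|h'|h'
  · exact absurd h (ne_of_lt (rank_lt_rank hx h'))
  · exact h'
  · exact absurd h.symm (ne_of_lt (rank_lt_rank hy h'))

lemma sort_image {S : Finset ℕ} {g : ℕ → ℕ}
    (hg : ∀ x ∈ S, ∀ y ∈ S, x < y → g x < g y) :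
    (S.image g).sort (· ≤ ·) = (S.sort (· ≤ ·)).map g := by
  have hinj : ∀ x ∈ S, ∀ y ∈ S, g x = g y → x = y := by
    intro x hx y hy hxy
    rcases lt_trichotomy x y with h'|h'|h'
    · exact absurd hxy (ne_of_lt (hg x hx y hy h'))
    · exact h'
    · exact absurd hxy.symm (ne_of_lt (hg y hy x hx h'))
  apply List_eq_of_perm_of_sorted
  · apply List.perm_of_nodup_nodup_toFinset_eq (Finset.sort_nodup _ _)
    · refine List.Nodup.map_on ?_ (Finset.sort_nodup _ _)
      intro x hx y hy
      exact hinj x (by simpa using (Finset.mem_sort (α:=ℕ) (·≤·)).1 hx)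
        y (by simpa using (Finset.mem_sort (α:=ℕ) (·≤·)).1 hy)
    · ext y
      simp only [List.mem_toFinset, Finset.mem_sort, List.mem_map, Finset.mem_image]
  · exact Finset.pairwise_sort _ _
  · -- map of sorted list is sorted
    have hs := (Finset.sortedLT_sort S).pairwise
    rw [List.pairwise_map]
    apply List.Pairwise.imp_of_mem (l := S.sort (· ≤ ·)) ?_ hs
    intro a b ha hb hab
    exact le_of_lt (hg a ((Finset.mem_sort (α:=ℕ) (·≤·)).1 ha)
      b ((Finset.mem_sort (α:=ℕ) (·≤·)).1 hb) hab)

lemma nth_image {S : Finset ℕ} {g : ℕ → ℕ}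
    (hg : ∀ x ∈ S, ∀ y ∈ S, x < y → g x < g y) {i : ℕ} (hi : i < S.card) :
    nth (S.image g) i = g (nth S i) := by
  rw [nth, nth, sort_image hg]
  rw [List.getD_eq_getElem _ _ (by simpa [Finset.length_sort] using hi),
    List.getD_eq_getElem _ _ (by simpa [Finset.length_sort] using hi)]
  simp

lemma nth_range {n i : ℕ} (hi : i < n) : nth (Finset.range n) i = i := by
  rw [nth, Finset.sort_range, List.getD_eq_getElem _ _ (by simpa using hi)]
  simp

lemma nth_zero_of_mem {S : Finset ℕ} (h : 0 ∈ S) : nth S 0 = 0 := by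
  have h0 : rank S 0 = 0 := by
    rw [rank, Finset.filter_false_of_mem] <;> simp
  conv_lhs => rw [← h0]
  rw [nth_rank h]

lemma sort_insert_zero {S : Finset ℕ} (h : 0 ∉ S) :
    (insert 0 S).sort (· ≤ ·) = 0 :: S.sort (· ≤ ·) := by
  apply List_eq_of_perm_of_sorted
  · apply List.perm_of_nodup_nodup_toFinset_eq (Finset.sort_nodup _ _)
    · exact List.Nodup.cons (by simpa using h) (Finset.sort_nodup _ _)
    · ext y; simp [Finset.mem_sort (α:=ℕ) (·≤·), or_comm]
  · exact Finset.pairwise_sort _ _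
  · rw [List.pairwise_cons]
    exact ⟨fun b _ => Nat.zero_le b, Finset.pairwise_sort _ _⟩

lemma nth_insert_zero {S : Finset ℕ} (h : 0 ∉ S) (i : ℕ) :
    nth (insert 0 S) (i + 1) = nth S i := by
  rw [nth, nth, sort_insert_zero h]; rfl

lemma nth_insert_zero' {S : Finset ℕ} (h : 0 ∉ S) : nth (insert 0 S) 0 = 0 := by
  rw [nth, sort_insert_zero h]; rfl


lemma rank_sdiff_add {N : ℕ} {T : Finset ℕ} {x : ℕ} (hx : x < N) :
    rank (Finset.range N \ T) x + rank T x = x := by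
  rw [rank, rank, ← Finset.card_union_of_disjoint, ← Finset.filter_union]
  · have : (Finset.range N \ T ∪ T).filter (· < x) = Finset.range x := by
      ext y
      simp only [Finset.mem_filter, Finset.mem_union, Finset.mem_sdiff, Finset.mem_range]
      constructor
      · rintro ⟨_, h2⟩; exact h2
      · intro h; refine ⟨?_, h⟩
        by_cases hy : y ∈ T
        · right; exact hy
        · left; exact ⟨by omega, hy⟩
    rw [this, Finset.card_range]
  · apply Finset.disjoint_filter_filter
    exact Finset.sdiff_disjoint

lemma sum_rank_self (T : Finset ℕ) : ∑ t ∈ T, rank T t = tri T.card := by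
  rw [tri]
  exact Finset.sum_nbij' (rank T) (nth T)
    (fun t ht => Finset.mem_range.2 (rank_lt_card ht))
    (fun i hi => nth_mem (Finset.mem_range.1 hi))
    (fun t ht => nth_rank ht)
    (fun i hi => rank_nth (Finset.mem_range.1 hi))
    (fun t _ => rfl)

lemma cross_add {T B : Finset ℕ} (h : Disjoint T B) :
    (∑ x ∈ B, #(T.filter (· < x))) + (∑ t ∈ T, #(B.filter (· < t))) = T.card * B.card := by
  have h2 : ∑ t ∈ T, #(B.filter (· < t)) = ∑ x ∈ B, ∑ t ∈ T, if x < t then 1 else 0 := by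
    rw [Finset.sum_comm]
    exact Finset.sum_congr rfl fun t _ => Finset.card_filter _ _
  have h1 : ∑ x ∈ B, #(T.filter (· < x)) = ∑ x ∈ B, ∑ t ∈ T, if t < x then 1 else 0 :=
    Finset.sum_congr rfl fun x _ => Finset.card_filter _ _
  rw [h1, h2, ← Finset.sum_add_distrib]
  have : ∀ x ∈ B, ((∑ t ∈ T, if t < x then 1 else 0) + ∑ t ∈ T, if x < t then 1 else 0 : ℕ)
      = T.card := by
    intro x hx
    rw [← Finset.sum_add_distrib]
    rw [Finset.card_eq_sum_ones]
    apply Finset.sum_congr rfl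
    intro t ht
    have : t ≠ x := fun hc => (Finset.disjoint_left.1 h ht) (hc ▸ hx)
    rcases lt_trichotomy t x with h'|h'|h'
    · simp [h', not_lt_of_gt h']
    · exact absurd h' this
    · simp [h', not_lt_of_gt h']
  rw [Finset.sum_congr rfl this, Finset.sum_const, smul_eq_mul, Nat.mul_comm]

lemma rank_union {T B : Finset ℕ} (h : Disjoint T B) (x : ℕ) :
    rank (T ∪ B) x = rank T x + rank B x := by
  rw [rank, rank, rank, Finset.filter_union, Finset.card_union_of_disjoint]
  exact Finset.disjoint_filter_filter h

lemma image_rank_self (W : Finset ℕ) : W.image (rank W) = Finset.range W.card := by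
  apply Finset.eq_of_subset_of_card_le
  · intro y hy
    obtain ⟨x, hx, rfl⟩ := Finset.mem_image.1 hy
    exact Finset.mem_range.2 (rank_lt_card hx)
  · rw [Finset.card_range, Finset.card_image_of_injOn]
    intro a ha b hb hab
    exact rank_injOn ha hb hab

lemma image_rank_sdiff {W T : Finset ℕ} (hT : T ⊆ W) :
    Finset.range W.card \ T.image (rank W) = (W \ T).image (rank W) := by
  ext y
  simp only [Finset.mem_sdiff, Finset.mem_range, Finset.mem_image]
  constructor
  · rintro ⟨hy, hnT⟩
    refine ⟨nth W y, ⟨nth_mem hy, fun hc => hnT ⟨nth W y, hc, rank_nth hy⟩⟩, rank_nth hy⟩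
  · rintro ⟨x, ⟨hxW, hxT⟩, rfl⟩
    refine ⟨rank_lt_card hxW, ?_⟩
    rintro ⟨t, htT, hteq⟩
    exact hxT (rank_injOn (hT htT) hxW hteq ▸ htT)

lemma range_succ_sdiff_shift {n : ℕ} {Y : Finset ℕ} :
    Finset.range (n+1) \ insert 0 (Y.image (· + 1)) = ((Finset.range n \ Y).image (· + 1)) := by
  ext x
  simp only [Finset.mem_sdiff, Finset.mem_range, Finset.mem_insert, Finset.mem_image]
  constructor
  · rintro ⟨hx, hn⟩
    push_neg at hn
    obtain ⟨h0, h1⟩ := hn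
    refine ⟨x - 1, ⟨by omega, fun hy => h1 (x-1) hy (by omega)⟩, by omega⟩
  · rintro ⟨z, ⟨hz, hzY⟩, rfl⟩
    refine ⟨by omega, ?_⟩
    push_neg
    refine ⟨by omega, ?_⟩
    intro y hy hc
    have : y = z := by omega
    exact hzY (this ▸ hy)


section Shuffle

/-- `σ` is increasing on the first `c` positions and on the remaining positions. -/
def IsShuffle {N : ℕ} (c : ℕ) (σ : Equiv.Perm (Fin N)) : Prop :=
  (∀ i j : Fin N, i < j → j.val < c → σ i < σ j) ∧
  (∀ i j : Fin N, i < j → c ≤ i.val → σ i < σ j)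

variable {N c : ℕ}

def blockSet (c : ℕ) (σ : Equiv.Perm (Fin N)) : Finset ℕ :=
  Finset.image (fun i => (σ i).val) (Finset.univ.filter fun i : Fin N => i.val < c)

def blockSum (c : ℕ) (σ : Equiv.Perm (Fin N)) : ℕ :=
  ∑ i ∈ Finset.univ.filter (fun i : Fin N => i.val < c), (σ i).val

lemma mem_blockSet {σ : Equiv.Perm (Fin N)} {x : ℕ} :
    x ∈ blockSet c σ ↔ ∃ i : Fin N, i.val < c ∧ (σ i).val = x := by
  simp only [blockSet, Finset.mem_image, Finset.mem_filter, Finset.mem_univ, true_and]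

lemma blockSet_sum (σ : Equiv.Perm (Fin N)) :
    ∑ x ∈ blockSet c σ, x = blockSum c σ := by
  rw [blockSet, Finset.sum_image]
  · rfl
  · intro i _ j _ h
    exact σ.injective (Fin.ext h)

lemma card_filter_lt (hcN : c ≤ N) :
    #(Finset.univ.filter fun i : Fin N => i.val < c) = c := by
  have he : (Finset.univ.filter fun i : Fin N => i.val < c)
      = (Finset.range c).attachFin
        (fun m hm => lt_of_lt_of_le (Finset.mem_range.1 hm) hcN) := by
    ext i; simp [Finset.mem_attachFin]
  rw [he, Finset.card_attachFin, Finset.card_range]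

lemma card_blockSet (hcN : c ≤ N) (σ : Equiv.Perm (Fin N)) :
    (blockSet c σ).card = c := by
  rw [blockSet, Finset.card_image_of_injOn, card_filter_lt hcN]
  intro i _ j _ h
  exact σ.injective (Fin.ext h)

lemma blockSet_subset (σ : Equiv.Perm (Fin N)) : blockSet c σ ⊆ Finset.range N := by
  intro x hx
  obtain ⟨i, _, rfl⟩ := mem_blockSet.1 hx
  exact Finset.mem_range.2 (σ i).isLt

lemma not_mem_blockSet {σ : Equiv.Perm (Fin N)} {i : Fin N} (hi : c ≤ i.val) :
    (σ i).val ∉ blockSet c σ := by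
  intro hmem
  obtain ⟨j, hj, hval⟩ := mem_blockSet.1 hmem
  have : j = i := σ.injective (Fin.ext hval)
  omega

lemma shuffle_nth1 {σ : Equiv.Perm (Fin N)} (hσ : IsShuffle c σ) (hcN : c ≤ N)
    {m : ℕ} (hm : m < c) :
    nth (blockSet c σ) m = (σ ⟨m, lt_of_lt_of_le hm hcN⟩).val := by
  have hsort : (blockSet c σ).sort (· ≤ ·)
      = List.ofFn (fun j : Fin c => (σ (Fin.castLE hcN j)).val) := by
    apply List_eq_of_perm_of_sorted
    · apply List.perm_of_nodup_nodup_toFinset_eq (Finset.sort_nodup _ _)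
      · apply List.nodup_ofFn.2
        intro i j hc
        have h1 := σ.injective (Fin.ext hc)
        have h2 : (Fin.castLE hcN i).val = (Fin.castLE hcN j).val := by rw [h1]
        exact Fin.ext (by simpa using h2)
      · ext x
        simp only [List.mem_toFinset, Finset.mem_sort, List.mem_ofFn, Set.mem_range,
          mem_blockSet]
        constructor
        · rintro ⟨i, hi, rfl⟩
          exact ⟨⟨i.val, hi⟩, rfl⟩
        · rintro ⟨j, rfl⟩
          exact ⟨Fin.castLE hcN j, j.isLt, rfl⟩
    · exact Finset.pairwise_sort _ _
    · rw [List.pairwise_ofFn]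
      intro i j hij
      refine le_of_lt (hσ.1 _ _ (by exact hij) ?_)
      rw [Fin.coe_castLE]
      exact j.isLt
  rw [nth, hsort, List.getD_eq_getElem _ _ (by simpa using hm)]
  simp

lemma shuffle_nth2 {σ : Equiv.Perm (Fin N)} (hσ : IsShuffle c σ) (hcN : c ≤ N)
    {j : ℕ} (hj : c + j < N) :
    nth (Finset.range N \ blockSet c σ) j = (σ ⟨c + j, hj⟩).val := by
  have hsort : (Finset.range N \ blockSet c σ).sort (· ≤ ·)
      = List.ofFn (fun j : Fin (N - c) => (σ ⟨c + j.val, by omega⟩).val) := by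
    apply List_eq_of_perm_of_sorted
    · apply List.perm_of_nodup_nodup_toFinset_eq (Finset.sort_nodup _ _)
      · apply List.nodup_ofFn.2
        intro i j hc
        have h1 := σ.injective (Fin.ext hc)
        simp only [Fin.mk.injEq] at h1
        exact Fin.ext (by omega)
      · ext x
        simp only [List.mem_toFinset, Finset.mem_sort, List.mem_ofFn, Set.mem_range,
          Finset.mem_sdiff, Finset.mem_range]
        constructor
        · rintro ⟨hx, hnb⟩
          have hiv : (σ (σ.symm ⟨x, hx⟩)).val = x := by simp
          have hic : c ≤ (σ.symm ⟨x, hx⟩).val := by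
            by_contra hcon
            exact hnb (mem_blockSet.2 ⟨σ.symm ⟨x, hx⟩, by omega, hiv⟩)
          refine ⟨⟨(σ.symm ⟨x, hx⟩).val - c, by omega⟩, ?_⟩
          simp only
          rw [show (⟨c + ((σ.symm ⟨x, hx⟩).val - c), by omega⟩ : Fin N)
            = σ.symm ⟨x, hx⟩ from Fin.ext (by simp; omega)]
          exact hiv
        · rintro ⟨j, rfl⟩
          exact ⟨(σ _).isLt, not_mem_blockSet (Nat.le_add_right _ _)⟩
    · exact Finset.pairwise_sort _ _
    · rw [List.pairwise_ofFn]
      intro i j hij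
      have hij' : (i : ℕ) < (j : ℕ) := hij
      exact le_of_lt (hσ.2 ⟨c + i.val, by omega⟩ ⟨c + j.val, by omega⟩
        (Fin.mk_lt_mk.2 (by omega)) (Nat.le_add_right _ _))
  have hjlt : j < N - c := by omega
  rw [nth, hsort, List.getD_eq_getElem _ _ (by simpa using hjlt)]
  simp

lemma swap_val {x : ℕ} (hx1 : 0 < x) (hxN : x < N) (w : Fin N) :
    ((Equiv.swap (⟨x - 1, by omega⟩ : Fin N) ⟨x, hxN⟩) w).val
      = if w.val = x - 1 then x else if w.val = x then x - 1 else w.val := by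
  rcases eq_or_ne w ⟨x - 1, by omega⟩ with rfl|h1
  · simp [Equiv.swap_apply_left]
  · rcases eq_or_ne w ⟨x, hxN⟩ with rfl|h2
    · simp only [Equiv.swap_apply_right]
      have hne : (x : ℕ) ≠ x - 1 := by omega
      simp [hne]
    · rw [Equiv.swap_apply_of_ne_of_ne h1 h2]
      have e1 : w.val ≠ x - 1 := fun hc => h1 (Fin.ext hc)
      have e2 : w.val ≠ x := fun hc => h2 (Fin.ext hc)
      simp [e1, e2]

lemma sign_shuffle (hcN : c ≤ N) :
    ∀ (n : ℕ) (σ : Equiv.Perm (Fin N)), IsShuffle c σ → blockSum c σ = n →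
    (Equiv.Perm.sign σ : ℤ) = (-1) ^ (blockSum c σ + tri c) := by
  intro n
  induction n using Nat.strong_induction_on with
  | _ n ih =>
  intro σ hσ hsum
  by_cases hex : ∃ x ∈ blockSet c σ, x ≠ 0 ∧ x - 1 ∉ blockSet c σ
  · obtain ⟨x, hxS, hx0, hxp⟩ := hex
    have hxN : x < N := Finset.mem_range.1 (blockSet_subset σ hxS)
    have hx1 : 0 < x := Nat.pos_of_ne_zero hx0
    have hne : (⟨x - 1, by omega⟩ : Fin N) ≠ ⟨x, hxN⟩ := by
      intro hc; simp only [Fin.mk.injEq] at hc; omega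
    set σ' : Equiv.Perm (Fin N) :=
      (Equiv.swap (⟨x - 1, by omega⟩ : Fin N) ⟨x, hxN⟩) * σ with hσ'def
    have hval : ∀ w : Fin N, (σ' w).val
        = if (σ w).val = x - 1 then x else if (σ w).val = x then x - 1 else (σ w).val := by
      intro w
      rw [hσ'def, Equiv.Perm.mul_apply, swap_val hx1 hxN]
    have hmem1 : ∀ i : Fin N, i.val < c → (σ i).val ∈ blockSet c σ := by
      intro i hi; exact mem_blockSet.2 ⟨i, hi, rfl⟩
    have hmem2 : ∀ i : Fin N, c ≤ i.val → (σ i).val ∉ blockSet c σ :=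
      fun i hi => not_mem_blockSet hi
    have hσ'shuffle : IsShuffle c σ' := by
      constructor
      · intro i j hij hjc
        have hic : i.val < c := lt_trans (by exact hij) hjc
        have h0 : (σ i).val < (σ j).val := hσ.1 i j hij hjc
        have hi1 : (σ i).val ≠ x - 1 := fun hc => hxp (hc ▸ hmem1 i hic)
        have hj1 : (σ j).val ≠ x - 1 := fun hc => hxp (hc ▸ hmem1 j hjc)
        have hijne : (σ i).val ≠ (σ j).val := by omega
        rw [Fin.lt_def, hval i, hval j]
        split_ifs <;> omega
      · intro i j hij hic
        have hjc : c ≤ j.val := le_trans hic (le_of_lt (by exact hij))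
        have h0 : (σ i).val < (σ j).val := hσ.2 i j hij hic
        have hi1 : (σ i).val ≠ x := fun hc => (hmem2 i hic) (hc ▸ hxS)
        have hj1 : (σ j).val ≠ x := fun hc => (hmem2 j hjc) (hc ▸ hxS)
        rw [Fin.lt_def, hval i, hval j]
        split_ifs <;> omega
    obtain ⟨i₀, hi₀c, hi₀v⟩ := mem_blockSet.1 hxS
    have hi₀mem : i₀ ∈ Finset.univ.filter (fun i : Fin N => i.val < c) := by
      simp [hi₀c]
    have hsum' : blockSum c σ = blockSum c σ' + 1 := by
      rw [blockSum, blockSum,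
        Finset.sum_eq_sum_sdiff_singleton_add hi₀mem ((fun i => (σ i).val)),
        Finset.sum_eq_sum_sdiff_singleton_add hi₀mem ((fun i => (σ' i).val))]
      have hcongr : ∀ w ∈ (Finset.univ.filter (fun i : Fin N => i.val < c)) \ {i₀},
          (σ' w).val = (σ w).val := by
        intro w hw
        simp only [Finset.mem_sdiff, Finset.mem_filter, Finset.mem_univ, true_and,
          Finset.mem_singleton] at hw
        have hwx : (σ w).val ≠ x := by
          intro hc
          exact hw.2 (σ.injective (Fin.ext (hc.trans hi₀v.symm)))
        have hwx1 : (σ w).val ≠ x - 1 := fun hc => hxp (hc ▸ hmem1 w hw.1)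
        rw [hval w]
        simp [hwx, hwx1]
      rw [Finset.sum_congr rfl hcongr]
      have hv0 : (σ' i₀).val = x - 1 := by
        rw [hval i₀]
        have hne1 : (σ i₀).val ≠ x - 1 := fun hc => hxp (hc ▸ hmem1 i₀ hi₀c)
        simp [hne1, hi₀v]
      rw [hv0, hi₀v]
      omega
    have hsignrel : (Equiv.Perm.sign σ : ℤ) = - (Equiv.Perm.sign σ' : ℤ) := by
      rw [hσ'def]
      simp [Equiv.Perm.sign_swap (hne)]
    have hlt : blockSum c σ' < n := by omega
    have ihres := ih _ hlt σ' hσ'shuffle rfl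
    rw [hsignrel, ihres, hsum']
    rw [show blockSum c σ' + 1 + tri c = (blockSum c σ' + tri c) + 1 by omega, pow_succ]
    ring
  · push_neg at hex
    have hdc : ∀ x ∈ blockSet c σ, x ≠ 0 → x - 1 ∈ blockSet c σ := hex
    have hSrange : blockSet c σ = Finset.range c := by
      have hsub : blockSet c σ ⊆ Finset.range c := by
        intro x hx
        have hdown : ∀ y, ∀ x ∈ blockSet c σ, y ≤ x → x - y ∈ blockSet c σ := by
          intro y
          induction y with
          | zero => intro x hx _; simpa using hx
          | succ m ihm =>
            intro x hx hyx
            have h1 : x - m ∈ blockSet c σ := ihm x hx (by omega)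
            have h2 : x - m ≠ 0 := by omega
            have h3 := hdc _ h1 h2
            rwa [show x - m - 1 = x - (m+1) by omega] at h3
        have hsubx : Finset.range (x+1) ⊆ blockSet c σ := by
          intro y hy
          have hy' := Finset.mem_range.1 hy
          have h4 := hdown (x - y) x hx (by omega)
          rwa [show x - (x - y) = y by omega] at h4
        have hcard := Finset.card_le_card hsubx
        rw [Finset.card_range, card_blockSet hcN] at hcard
        exact Finset.mem_range.2 hcard
      exact Finset.eq_of_subset_of_card_le hsub
        (by rw [Finset.card_range, card_blockSet hcN])
    have hbs : blockSum c σ = tri c := by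
      rw [← blockSet_sum, hSrange]; rfl
    have hid : σ = 1 := by
      ext i
      show (σ i).val = (i : Fin N).val
      by_cases hic : i.val < c
      · have h1 := shuffle_nth1 hσ hcN hic
        rw [hSrange, nth_range hic] at h1
        rw [show (⟨i.val, lt_of_lt_of_le hic hcN⟩ : Fin N) = i from Fin.ext rfl] at h1
        omega
      · have hjx : c + (i.val - c) < N := by omega
        have h1 := shuffle_nth2 hσ hcN hjx
        rw [show (⟨c + (i.val - c), hjx⟩ : Fin N) = i from Fin.ext (by simp; omega)] at h1
        rw [hSrange] at h1
        have hco : Finset.range N \ Finset.range c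
            = (Finset.range (N - c)).image (· + c) := by
          ext z
          simp only [Finset.mem_sdiff, Finset.mem_range, Finset.mem_image]
          constructor
          · intro hz; exact ⟨z - c, by omega, by omega⟩
          · rintro ⟨w, hw, rfl⟩; omega
        rw [hco, nth_image (by intro u _ v _ huv; omega)
          (by rw [Finset.card_range]; omega), nth_range (by omega)] at h1
        omega
    rw [hbs, hid]
    simp [← two_mul, pow_mul]

def shufFun (N c : ℕ) (S : Finset ℕ) : Fin N → ℕ := fun i =>
  if i.val < c then nth S i.val else nth (Finset.range N \ S) (i.val - c)

lemma exists_shuffle (hcN : c ≤ N) {S : Finset ℕ} (hS : S ⊆ Finset.range N)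
    (hcard : S.card = c) :
    ∃ σ : Equiv.Perm (Fin N), IsShuffle c σ ∧ blockSet c σ = S := by
  have hcoN : (Finset.range N \ S).card = N - c := by
    rw [Finset.card_sdiff_of_subset hS, Finset.card_range, hcard]
  have hmem1 : ∀ m : ℕ, m < c → nth S m ∈ S := fun m hm => nth_mem (by omega)
  have hmem2 : ∀ m : ℕ, m < N - c → nth (Finset.range N \ S) m ∈ Finset.range N \ S :=
    fun m hm => nth_mem (by rw [hcoN]; omega)
  have hbound : ∀ i : Fin N, shufFun N c S i < N := by
    intro i
    rw [shufFun]
    split_ifs with h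
    · exact Finset.mem_range.1 (hS (hmem1 _ h))
    · have := hmem2 (i.val - c) (by omega)
      rw [Finset.mem_sdiff, Finset.mem_range] at this
      exact this.1
  have hinj : Function.Injective (fun i : Fin N => (⟨shufFun N c S i, hbound i⟩ : Fin N)) := by
    intro i j hij
    simp only [Fin.mk.injEq, shufFun] at hij
    by_cases hi : i.val < c <;> by_cases hj : j.val < c <;>
      simp only [hi, hj, if_true, if_false] at hij
    · exact Fin.ext (nth_injOn (by omega) (by omega) hij)
    · exfalso
      have h2 := hmem2 (j.val - c) (by omega)
      rw [← hij, Finset.mem_sdiff] at h2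
      exact h2.2 (hmem1 _ hi)
    · exfalso
      have h2 := hmem2 (i.val - c) (by omega)
      rw [hij, Finset.mem_sdiff] at h2
      exact h2.2 (hmem1 _ hj)
    · have := nth_injOn (S := Finset.range N \ S) (by rw [hcoN]; omega)
        (by rw [hcoN]; omega) hij
      exact Fin.ext (by omega)
  refine ⟨Equiv.ofBijective _ (Finite.injective_iff_bijective.1 hinj), ⟨?_, ?_⟩, ?_⟩
  · intro i j hij hjc
    have hic : i.val < c := lt_trans (by exact hij) hjc
    show (⟨shufFun N c S i, _⟩ : Fin N) < ⟨shufFun N c S j, _⟩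
    rw [Fin.mk_lt_mk]
    simp only [shufFun, hic, hjc, if_true]
    exact nth_lt_nth (S := S) (by exact hij) (by omega)
  · intro i j hij hic
    have hjc : c ≤ j.val := le_trans hic (le_of_lt (by exact hij))
    show (⟨shufFun N c S i, _⟩ : Fin N) < ⟨shufFun N c S j, _⟩
    rw [Fin.mk_lt_mk]
    simp only [shufFun, if_neg (not_lt_of_ge hic), if_neg (not_lt_of_ge hjc)]
    have hijv : (i : ℕ) < (j : ℕ) := hij
    exact nth_lt_nth (S := Finset.range N \ S) (by omega) (by rw [hcoN]; omega)
  · ext x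
    rw [mem_blockSet]
    constructor
    · rintro ⟨i, hi, rfl⟩
      show shufFun N c S i ∈ S
      simp only [shufFun, if_pos hi]
      exact hmem1 _ hi
    · intro hx
      have hr : rank S x < c := hcard ▸ rank_lt_card hx
      refine ⟨⟨rank S x, by omega⟩, by simpa using hr, ?_⟩
      show shufFun N c S _ = x
      simp only [shufFun]
      rw [if_pos (show ((⟨rank S x, by omega⟩ : Fin N)).val < c by simpa using hr)]
      exact nth_rank hx

end Shuffle


section Alg
variable {A : Type*} [CommRing A] [Algebra ℝ A]

def eps (c : ℕ) (S : Finset ℕ) : ℤ := (-1)^(∑ i ∈ S, i + tri c)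

def cons (a : A) (g : ℕ → A) : ℕ → A := fun t => if t = 0 then a else g (t-1)

def sel (S : Finset ℕ) (f : ℕ → A) : ℕ → A := fun m => f (nth S m)

@[simp] lemma cons_zero (a : A) (g : ℕ → A) : cons a g 0 = a := rfl

@[simp] lemma cons_succ (a : A) (g : ℕ → A) (t : ℕ) : cons a g (t+1) = g t := rfl

lemma sel_apply (S : Finset ℕ) (f : ℕ → A) (m : ℕ) : sel S f m = f (nth S m) := rfl

lemma cons_eq_update (a x : A) (g : ℕ → A) :
    cons a g = Function.update (cons x g) 0 a := by
  funext t
  rcases t with _|t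
  · simp
  · rw [Function.update_of_ne (Nat.succ_ne_zero t)]
    rfl

def comp' (k k' : ℕ) (D D' : (ℕ → A) → A) : (ℕ → A) → A :=
  fun f => ∑ S ∈ (Finset.range (k + k' - 1)).powersetCard k',
    eps k' S • D (cons (D' (sel S f)) (sel (Finset.range (k + k' - 1) \ S) f))

lemma D_cons_add {k : ℕ} {D : (ℕ → A) → A} (hD : IsAltDeriv k D) (hk : 0 < k)
    (g : ℕ → A) (x y : A) : D (cons (x + y) g) = D (cons x g) + D (cons y g) := by
  have h := hD.map_add 0 hk (cons x g) x y
  rw [cons_eq_update (x + y) x g, cons_eq_update y x g, h]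
  congr 1
  · congr 1
    funext t
    rcases t with _|t
    · simp
    · rw [Function.update_of_ne (by omega)]

/-- `x ↦ D (cons x g)` as an additive monoid hom. -/
def consHom {k : ℕ} {D : (ℕ → A) → A} (hD : IsAltDeriv k D) (hk : 0 < k)
    (g : ℕ → A) : A →+ A :=
  AddMonoidHom.mk' (fun x => D (cons x g)) (D_cons_add hD hk g)

lemma consHom_apply {k : ℕ} {D : (ℕ → A) → A} (hD : IsAltDeriv k D) (hk : 0 < k)
    (g : ℕ → A) (x : A) : consHom hD hk g x = D (cons x g) := rfl

lemma D_antisym {k : ℕ} {D : (ℕ → A) → A} (hD : IsAltDeriv k D) (hk : 1 < k)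
    (x y : A) (g : ℕ → A) : D (cons x (cons y g)) = - D (cons y (cons x g)) := by
  have hk0 : 0 < k := by omega
  set base : ℕ → A := cons x (cons y g) with hbase
  have key : ∀ z w : A, cons z (cons w g)
      = Function.update (Function.update base 0 z) 1 w := by
    intro z w
    funext t
    rcases t with _|t
    · rw [Function.update_of_ne (by omega), Function.update_self]
      rfl
    · rcases t with _|t
      · rw [Function.update_self]; rfl
      · rw [Function.update_of_ne (by omega), Function.update_of_ne (by omega)]
        rfl
  have key' : ∀ z w : A, Function.update (Function.update base 0 z) 1 w
      = Function.update (Function.update base 1 w) 0 z := by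
    intro z w
    exact Function.update_comm (by omega) _ _ _
  have hzero : ∀ z : A, D (cons z (cons z g)) = 0 := by
    intro z
    exact hD.alternating 0 1 hk0 hk (by omega) _ (by simp)
  have hexp : D (cons (x+y) (cons (x+y) g)) =
      D (cons x (cons x g)) + D (cons x (cons y g))
        + (D (cons y (cons x g)) + D (cons y (cons y g))) := by
    rw [key (x+y) (x+y), hD.map_add 1 hk _ x y]
    rw [key' (x+y) x, hD.map_add 0 hk0 _ x y, key' (x+y) y, hD.map_add 0 hk0 _ x y]
    rw [← key' x x, ← key x x, ← key' y x, ← key y x,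
      ← key' x y, ← key x y, ← key' y y, ← key y y]
    ring
  rw [hzero, hzero, hzero, zero_add, add_zero] at hexp
  exact eq_neg_of_add_eq_zero_left hexp.symm

def Dep (n : ℕ) (D : (ℕ → A) → A) : Prop :=
  ∀ f g : ℕ → A, (∀ i < n, f i = g i) → D f = D g

lemma dep_altComp (k k' : ℕ) (D D' : (ℕ → A) → A) :
    Dep (k + k' - 1) (altComp k k' D D') := by
  intro f g hfg
  unfold altComp
  apply Finset.sum_congr rfl
  intro σ _
  by_cases hσ : _root_.IsShuffle k' σ
  · rw [if_pos hσ, if_pos hσ]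
    congr 1
    apply congrArg
    funext t
    rcases t with _|t
    · rw [if_pos rfl, if_pos rfl]
      refine congrArg D' (funext fun m => ?_)
      by_cases hm : m < k' ∧ m < k + k' - 1
      · rw [dif_pos hm, dif_pos hm, hfg _ (σ ⟨m, hm.2⟩).isLt]
      · rw [dif_neg hm, dif_neg hm]
    · rw [if_neg (Nat.succ_ne_zero t), if_neg (Nat.succ_ne_zero t)]
      by_cases ht : t + 1 < k ∧ k' + (t+1) - 1 < k + k' - 1
      · rw [dif_pos ht, dif_pos ht, hfg _ (σ ⟨k' + (t+1) - 1, ht.2⟩).isLt]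
      · rw [dif_neg ht, dif_neg ht]
  · rw [if_neg hσ, if_neg hσ]

lemma dep_altBracket (k k' : ℕ) (D D' : (ℕ → A) → A) (h : k + k' - 1 = k' + k - 1) :
    Dep (k + k' - 1) (altBracket k k' D D') := by
  intro f g hfg
  unfold altBracket
  rw [dep_altComp k k' D D' f g hfg, dep_altComp k' k D' D f g (by rw [← h]; exact hfg)]

lemma shuffle_unique {N c : ℕ} {σ τ : Equiv.Perm (Fin N)} (hcN : c ≤ N)
    (hσ : IsShuffle c σ) (hτ : IsShuffle c τ) (h : blockSet c σ = blockSet c τ) :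
    σ = τ := by
  ext i
  by_cases hic : i.val < c
  · have h1 := shuffle_nth1 hσ hcN hic
    have h2 := shuffle_nth1 hτ hcN hic
    rw [show (⟨i.val, lt_of_lt_of_le hic hcN⟩ : Fin N) = i from Fin.ext rfl] at h1 h2
    rw [← h1, h, h2]
  · have hj : c + (i.val - c) < N := by omega
    have h1 := shuffle_nth2 hσ hcN hj
    have h2 := shuffle_nth2 hτ hcN hj
    rw [show (⟨c + (i.val - c), hj⟩ : Fin N) = i from Fin.ext (by simp; omega)] at h1 h2
    rw [← h1, h, h2]

/-- conversion between global and local IsShuffle -/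
lemma isShuffle_iff {N c : ℕ} (σ : Equiv.Perm (Fin N)) :
    _root_.IsShuffle c σ ↔ IsShuffle c σ := Iff.rfl

noncomputable def shuffleOf (N c : ℕ) (S : Finset ℕ) : Equiv.Perm (Fin N) :=
  if h : c ≤ N ∧ S ⊆ Finset.range N ∧ S.card = c then
    (exists_shuffle h.1 h.2.1 h.2.2).choose
  else 1

lemma shuffleOf_spec {N c : ℕ} {S : Finset ℕ} (hcN : c ≤ N) (hS : S ⊆ Finset.range N)
    (hcard : S.card = c) :
    IsShuffle c (shuffleOf N c S) ∧ blockSet c (shuffleOf N c S) = S := by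
  rw [shuffleOf, dif_pos ⟨hcN, hS, hcard⟩]
  exact (exists_shuffle hcN hS hcard).choose_spec

theorem altComp_eq_comp' {k k' : ℕ} (hk : 1 ≤ k) (hk' : 1 ≤ k')
    (D D' : (ℕ → A) → A) (hD : Dep k D) (hD' : Dep k' D') (f : ℕ → A) :
    altComp k k' D D' f = comp' k k' D D' f := by
  set N := k + k' - 1 with hN
  have hk'N : k' ≤ N := by omega
  unfold altComp comp'
  rw [← Finset.sum_filter]
  refine Finset.sum_nbij' (fun σ => blockSet k' σ) (fun S => shuffleOf N k' S)
    ?_ ?_ ?_ ?_ ?_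
  · intro σ hσ
    rw [Finset.mem_filter] at hσ
    exact Finset.mem_powersetCard.2 ⟨blockSet_subset σ, card_blockSet hk'N σ⟩
  · intro S hS
    rw [Finset.mem_powersetCard] at hS
    rw [Finset.mem_filter]
    exact ⟨Finset.mem_univ _, (shuffleOf_spec hk'N hS.1 hS.2).1⟩
  · intro σ hσ
    rw [Finset.mem_filter] at hσ
    have hbs := shuffleOf_spec hk'N (blockSet_subset σ) (card_blockSet hk'N σ)
    exact shuffle_unique hk'N hbs.1 hσ.2 hbs.2
  · intro S hS
    rw [Finset.mem_powersetCard] at hS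
    exact (shuffleOf_spec hk'N hS.1 hS.2).2
  · intro σ hσ
    rw [Finset.mem_filter] at hσ
    have hσs : IsShuffle k' σ := hσ.2
    -- sign
    have hsign : (Equiv.Perm.sign σ : ℤ) = eps k' (blockSet k' σ) := by
      rw [sign_shuffle hk'N (blockSum k' σ) σ hσs rfl, eps, blockSet_sum]
    rw [hsign]
    congr 1
    apply hD
    intro t ht
    rcases t with _|t
    · simp only [if_pos rfl, cons_zero]
      apply hD'
      intro m hm
      have hmN : m < N := by omega
      rw [dif_pos ⟨hm, hmN⟩, sel_apply, shuffle_nth1 hσs hk'N hm]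
    · have h2 : k' + (t+1) - 1 < N := by omega
      simp only [Nat.succ_ne_zero, if_false, cons_succ]
      rw [dif_pos ⟨ht, h2⟩, sel_apply, shuffle_nth2 hσs hk'N (j := t)
        (by omega)]
      congr 2

end Alg

section NestedDefs

def cross (X Y : Finset ℕ) : ℕ := ∑ y ∈ Y, #(X.filter (· < y))

lemma cross_comm_add {X Y : Finset ℕ} (h : Disjoint X Y) :
    cross X Y + cross Y X = X.card * Y.card := by
  have h1 : cross Y X = ∑ t ∈ X, #(Y.filter (· < t)) := rfl
  rw [cross, h1, cross_add h]

def hshiftF (N : ℕ) (T : Finset ℕ) : ℕ → ℕ := fun u => nth (Finset.range N \ T) (u - 1)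

def fwdW (N : ℕ) (T U : Finset ℕ) : Finset ℕ :=
  T ∪ (U.erase 0).image (hshiftF N T)

def fwdR (N : ℕ) (T U : Finset ℕ) : Finset ℕ := T.image (rank (fwdW N T U))

def bwdT (W R : Finset ℕ) : Finset ℕ := R.image (nth W)

def bwdU (N : ℕ) (W R : Finset ℕ) : Finset ℕ :=
  insert 0 ((W \ bwdT W R).image (fun x => rank (Finset.range N \ bwdT W R) x + 1))

end NestedDefs

section Nested
variable {A : Type*} [CommRing A] [Algebra ℝ A]

lemma nested_main {a b c : ℕ} {T U : Finset ℕ}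
    (hT : T ⊆ Finset.range (a+b+c+1)) (hTc : T.card = c+1)
    (hU : U ⊆ Finset.range (a+b+1)) (hUc : U.card = b+1) (h0 : 0 ∈ U)
    {D D' D'' : (ℕ → A) → A}
    (hD : IsAltDeriv (a+1) D) (hD' : IsAltDeriv (b+1) D') (hD'' : IsAltDeriv (c+1) D'')
    (f : ℕ → A) :
    fwdW (a+b+c+1) T U ∈ (Finset.range (a+b+c+1)).powersetCard (b+c+1)
    ∧ fwdR (a+b+c+1) T U ∈ (Finset.range (b+c+1)).powersetCard (c+1)
    ∧ bwdT (fwdW (a+b+c+1) T U) (fwdR (a+b+c+1) T U) = T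
    ∧ bwdU (a+b+c+1) (fwdW (a+b+c+1) T U) (fwdR (a+b+c+1) T U) = U
    ∧ (eps (c+1) T * eps (b+1) U) •
        D (cons (D' (sel U (cons (D'' (sel T f)) (sel (Finset.range (a+b+c+1) \ T) f))))
          (sel (Finset.range (a+b+1) \ U)
            (cons (D'' (sel T f)) (sel (Finset.range (a+b+c+1) \ T) f))))
      = (eps (b+c+1) (fwdW (a+b+c+1) T U) * eps (c+1) (fwdR (a+b+c+1) T U)) •
        D (cons (D' (cons (D'' (sel (fwdR (a+b+c+1) T U) (sel (fwdW (a+b+c+1) T U) f)))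
                 (sel (Finset.range (b+c+1) \ fwdR (a+b+c+1) T U)
                   (sel (fwdW (a+b+c+1) T U) f))))
          (sel (Finset.range (a+b+c+1) \ fwdW (a+b+c+1) T U) f)) := by
  set N := a+b+c+1 with hN
  set Tc : Finset ℕ := Finset.range N \ T with hTcdef
  have hTcCard : Tc.card = a + b := by
    rw [hTcdef, Finset.card_sdiff_of_subset hT, Finset.card_range, hTc]; omega
  -- the image set B
  set B : Finset ℕ := (U.erase 0).image (hshiftF N T) with hBdef
  have hUe : ∀ u ∈ U.erase 0, 1 ≤ u ∧ u < a+b+1 := by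
    intro u hu
    rw [Finset.mem_erase] at hu
    exact ⟨by omega, Finset.mem_range.1 (hU hu.2)⟩
  have hsMono : ∀ u ∈ U.erase 0, ∀ u' ∈ U.erase 0, u < u' →
      hshiftF N T u < hshiftF N T u' := by
    intro u hu u' hu' huu
    have h1 := hUe u hu
    have h2 := hUe u' hu'
    exact nth_lt_nth (S := Tc) (by omega) (by omega)
  have hBsub : B ⊆ Tc := by
    intro x hx
    rw [hBdef] at hx
    obtain ⟨u, hu, rfl⟩ := Finset.mem_image.1 hx
    have h1 := hUe u hu
    exact nth_mem (by omega)
  have hBinj : Set.InjOn (hshiftF N T) ↑(U.erase 0) := by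
    intro u hu u' hu' huu
    have hu1 := Finset.mem_coe.1 hu
    have hu2 := Finset.mem_coe.1 hu'
    rcases lt_trichotomy u u' with h'|h'|h'
    · exact absurd huu (ne_of_lt (hsMono u hu1 u' hu2 h'))
    · exact h'
    · exact absurd huu.symm (ne_of_lt (hsMono u' hu2 u hu1 h'))
  have hBcard : B.card = b := by
    rw [hBdef, Finset.card_image_of_injOn hBinj, Finset.card_erase_of_mem h0, hUc]
    omega
  have hdisjTB : Disjoint T B := by
    rw [Finset.disjoint_right]
    intro x hx
    exact (Finset.mem_sdiff.1 (hBsub hx)).2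
  set W : Finset ℕ := fwdW N T U with hWdef
  have hWTB : W = T ∪ B := rfl
  have hWcard : W.card = b + c + 1 := by
    rw [hWTB, Finset.card_union_of_disjoint hdisjTB, hTc, hBcard]; omega
  have hWsub : W ⊆ Finset.range N := by
    rw [hWTB]
    intro x hx
    rcases Finset.mem_union.1 hx with h|h
    · exact hT h
    · exact (Finset.mem_sdiff.1 (hBsub h)).1
  have hTW : T ⊆ W := by rw [hWTB]; exact Finset.subset_union_left
  have hBW : B ⊆ W := by rw [hWTB]; exact Finset.subset_union_right
  have hWT : W \ T = B := by
    rw [hWTB, Finset.union_sdiff_cancel_left hdisjTB]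
  set R : Finset ℕ := fwdR N T U with hRdef
  have hRim : R = T.image (rank W) := rfl
  have hrankWmono : ∀ x ∈ W, ∀ y ∈ W, x < y → rank W x < rank W y := by
    intro x hx y hy hxy
    exact rank_lt_rank hx hxy
  have hRcard : R.card = c + 1 := by
    rw [hRim, Finset.card_image_of_injOn, hTc]
    intro x hx y hy hxy
    exact rank_injOn (hTW hx) (hTW hy) hxy
  have hRsub : R ⊆ Finset.range (b+c+1) := by
    rw [hRim]
    intro y hy
    obtain ⟨t, ht, rfl⟩ := Finset.mem_image.1 hy
    rw [Finset.mem_range, ← hWcard]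
    exact rank_lt_card (hTW ht)
  -- X1 : nth W (nth R m) = nth T m for m < c+1
  have hX1 : ∀ m, m < c + 1 → nth W (nth R m) = nth T m := by
    intro m hm
    rw [hRim, nth_image (fun x hx y hy h => hrankWmono x (hTW hx) y (hTW hy) h)
      (by omega), nth_rank (hTW (nth_mem (by omega)))]
  -- U erased description
  have hrinj : Set.InjOn (fun x => rank Tc x + 1) ↑B := by
    intro x hx y hy hxy
    have hxy' : rank Tc x + 1 = rank Tc y + 1 := hxy
    exact rank_injOn (hBsub (Finset.mem_coe.1 hx)) (hBsub (Finset.mem_coe.1 hy))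
      (by omega)
  have hUerase : U.erase 0 = B.image (fun x => rank Tc x + 1) := by
    apply Finset.eq_of_subset_of_card_le
    · intro u hu
      have h1 := hUe u hu
      refine Finset.mem_image.2 ⟨hshiftF N T u, Finset.mem_image_of_mem _ hu, ?_⟩
      rw [hshiftF, rank_nth (by omega)]
      omega
    · rw [Finset.card_image_of_injOn hrinj, hBcard, Finset.card_erase_of_mem h0, hUc]
      omega
  have hUins : U = insert 0 (B.image (fun x => rank Tc x + 1)) := by
    rw [← hUerase, Finset.insert_erase h0]
  -- X5
  have hX5 : Finset.range (a+b+1) \ U = ((Tc \ B).image (rank Tc)).image (· + 1) := by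
    rw [hUins]
    have h1 : B.image (fun x => rank Tc x + 1) = (B.image (rank Tc)).image (· + 1) := by
      ext z
      simp only [Finset.mem_image]
      constructor
      · rintro ⟨x, hx, rfl⟩; exact ⟨rank Tc x, ⟨x, hx, rfl⟩, rfl⟩
      · rintro ⟨y, ⟨x, hx, rfl⟩, rfl⟩; exact ⟨x, hx, rfl⟩
    rw [h1, show a+b+1 = (a+b)+1 from rfl, range_succ_sdiff_shift]
    congr 1
    rw [← hTcCard, image_rank_sdiff hBsub]
  -- X3
  have hX3 : Finset.range (b+c+1) \ R = B.image (rank W) := by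
    rw [hRim, ← hWcard, image_rank_sdiff hTW, hWT]
  -- X4
  have hX4 : Finset.range N \ W = Tc \ B := by
    rw [hWTB, hTcdef]
    ext x
    simp only [Finset.mem_sdiff, Finset.mem_union]
    tauto
  -- inverse identities
  have hbT : bwdT W R = T := by
    rw [bwdT, hRim]
    ext z
    simp only [Finset.mem_image]
    constructor
    · rintro ⟨y, ⟨t, ht, rfl⟩, rfl⟩
      rw [nth_rank (hTW ht)]; exact ht
    · intro hz
      exact ⟨rank W z, ⟨z, hz, rfl⟩, nth_rank (hTW hz)⟩
  have hbU : bwdU N W R = U := by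
    rw [bwdU, hbT, hWT, ← hTcdef, ← hUerase, Finset.insert_erase h0]
  refine ⟨Finset.mem_powersetCard.2 ⟨hWsub, by rw [hWcard]⟩,
    Finset.mem_powersetCard.2 ⟨hRsub, hRcard⟩, hbT, hbU, ?_⟩
  -- now the term equality
  -- sign part
  have hsum_rank : ∀ x ∈ B, rank Tc x + #(T.filter (· < x)) = x := by
    intro x hx
    have h1 := Finset.mem_sdiff.1 (hBsub hx)
    rw [hTcdef]
    exact rank_sdiff_add (Finset.mem_range.1 h1.1)
  have he1 : (∑ u ∈ U, u) + cross T B = (∑ x ∈ B, x) + b := by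
    have h2 : (∑ u ∈ U, u) = ∑ x ∈ B, (rank Tc x + 1) := by
      rw [hUins, Finset.sum_insert (by
        intro hc
        obtain ⟨x, _, hx⟩ := Finset.mem_image.1 hc
        omega)]
      rw [Finset.sum_image (fun x hx y hy hxy =>
        rank_injOn (hBsub hx) (hBsub hy) (by omega))]
      omega
    have h3 : (∑ x ∈ B, rank Tc x) + (∑ x ∈ B, #(T.filter (· < x)))
        = ∑ x ∈ B, x := by
      rw [← Finset.sum_add_distrib]
      exact Finset.sum_congr rfl hsum_rank
    rw [h2, Finset.sum_add_distrib, Finset.sum_const, smul_eq_mul, mul_one, hBcard,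
      cross]
    omega
  have he2 : (∑ x ∈ W, x) = (∑ x ∈ T, x) + (∑ x ∈ B, x) := by
    rw [hWTB, Finset.sum_union hdisjTB]
  have he3 : (∑ x ∈ R, x) = tri (c+1) + cross B T := by
    rw [hRim, Finset.sum_image (fun x hx y hy hxy =>
      rank_injOn (hTW hx) (hTW hy) hxy)]
    have h1 : ∀ t ∈ T, rank W t = rank T t + rank B t := by
      intro t ht
      rw [hWTB, rank_union hdisjTB]
    rw [Finset.sum_congr rfl h1, Finset.sum_add_distrib, sum_rank_self, hTc]
    rfl
  have he4 : cross T B + cross B T = (c+1) * b := by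
    rw [cross_comm_add hdisjTB, hTc, hBcard]
  have hsign : eps (c+1) T * eps (b+1) U = eps (b+c+1) W * eps (c+1) R := by
    rw [eps, eps, eps, eps, ← pow_add, ← pow_add]
    apply npow_eq
    have ht1 : tri (b+c+1) = tri (b+1) + tri c + (b+1)*c := by
      rw [show b+c+1 = (b+1)+c by omega, tri_add]
    have ht2 : tri (c+1) = tri c + c := tri_succ c
    have hp1 : (c+1) * b = b*c + b := by ring
    have hp2 : (b+1) * c = b*c + c := by ring
    omega
  rw [hsign]
  congr 1
  -- functional equality of the D arguments
  apply hD.depends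
  intro t ht
  rcases t with _|t
  · -- slot 0 : the D' values
    rw [cons_zero, cons_zero]
    apply hD'.depends
    intro m hm
    rcases m with _|m
    · -- D'' values
      rw [sel_apply, nth_zero_of_mem h0, cons_zero, cons_zero]
      apply hD''.depends
      intro s hs
      rw [sel_apply, sel_apply, sel_apply, hX1 s hs]
    · -- middle values
      rw [sel_apply, cons_succ, sel_apply]
      have hmb : m < b := by omega
      have hnthU : nth U (m+1) = nth (U.erase 0) m := by
        conv_lhs => rw [← Finset.insert_erase h0]
        exact nth_insert_zero (by simp) m
      have hmem : nth (U.erase 0) m ∈ U.erase 0 := by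
        apply nth_mem
        rw [Finset.card_erase_of_mem h0, hUc]
        omega
      have h1 := hUe _ hmem
      rw [hnthU]
      rw [show nth (U.erase 0) m = (nth (U.erase 0) m - 1) + 1 by omega, cons_succ]
      rw [sel_apply]
      have hlhs : nth Tc (nth (U.erase 0) m - 1) = nth B m := by
        rw [hBdef, nth_image hsMono (by rw [Finset.card_erase_of_mem h0, hUc]; omega)]
        rfl
      rw [hlhs, hX3, nth_image (fun x hx y hy h => hrankWmono x (hBW hx) y (hBW hy) h)
        (by omega), sel_apply, nth_rank (hBW (nth_mem (by omega)))]
  · -- tail slots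
    rw [cons_succ, cons_succ, sel_apply, sel_apply]
    have hta : t < a := by omega
    have hcardNU : (Finset.range (a+b+1) \ U).card = a := by
      rw [Finset.card_sdiff_of_subset hU, Finset.card_range, hUc]
      omega
    have hcardTcB : (Tc \ B).card = a := by
      rw [Finset.card_sdiff_of_subset hBsub, hTcCard, hBcard]
      omega
    have hinjTcB : Set.InjOn (rank Tc) ↑(Tc \ B) := by
      intro x hx y hy hxy
      exact rank_injOn (Finset.mem_sdiff.1 (Finset.mem_coe.1 hx)).1
        (Finset.mem_sdiff.1 (Finset.mem_coe.1 hy)).1 hxy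
    have hcardimg : ((Tc \ B).image (rank Tc)).card = a := by
      rw [Finset.card_image_of_injOn hinjTcB, hcardTcB]
    have hnth : nth (Finset.range (a+b+1) \ U) t
        = rank Tc (nth (Tc \ B) t) + 1 := by
      rw [hX5]
      rw [nth_image (g := (· + 1)) (fun x _ y _ h => Nat.add_lt_add_right h 1)
        (by rw [hcardimg]; exact hta)]
      rw [nth_image (fun x hx y hy h =>
        rank_lt_rank (Finset.mem_sdiff.1 hx).1 h) (by rw [hcardTcB]; exact hta)]
    rw [hnth, cons_succ, sel_apply, nth_rank (Finset.mem_sdiff.1 (nth_mem (by rw [hcardTcB]; exact hta))).1, hX4]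

end Nested

lemma range_succ_sdiff_shift' {n : ℕ} {Y : Finset ℕ} :
    Finset.range (n+1) \ (Y.image (· + 1)) = insert 0 ((Finset.range n \ Y).image (· + 1)) := by
  ext x
  simp only [Finset.mem_sdiff, Finset.mem_range, Finset.mem_insert, Finset.mem_image]
  constructor
  · rintro ⟨hx, hn⟩
    rcases Nat.eq_zero_or_pos x with rfl|hpos
    · exact Or.inl rfl
    · refine Or.inr ⟨x - 1, ⟨by omega, fun hy => hn ⟨x - 1, hy, by omega⟩⟩, by omega⟩
  · rintro (rfl|⟨z, ⟨hz, hzY⟩, rfl⟩)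
    · refine ⟨by omega, ?_⟩
      rintro ⟨y, _, hc⟩
      omega
    · refine ⟨by omega, ?_⟩
      rintro ⟨y, hy, hc⟩
      have : y = z := by omega
      exact hzY (this ▸ hy)

section DisjDefs
variable {A : Type*} [CommRing A] [Algebra ℝ A]

def deltaSign (b c : ℕ) (S' S'' : Finset ℕ) : ℤ :=
  (-1)^((∑ i ∈ S', i) + (∑ i ∈ S'', i) + tri (b+1) + tri (c+1) + (b+1) + cross S'' S')

def fwdB (N : ℕ) (T U : Finset ℕ) : Finset ℕ := U.image (hshiftF N T)

def bwdU2 (N : ℕ) (S' S'' : Finset ℕ) : Finset ℕ :=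
  S'.image (fun x => rank (Finset.range N \ S'') x + 1)

def disj (a b c : ℕ) (D D' D'' : (ℕ → A) → A) : (ℕ → A) → A := fun f =>
  ∑ p ∈ (Finset.range (a+b+c+1)).powersetCard (b+1) ×ˢ
      (Finset.range (a+b+c+1)).powersetCard (c+1),
    if Disjoint p.1 p.2 then
      deltaSign b c p.1 p.2 •
        D (cons (D' (sel p.1 f)) (cons (D'' (sel p.2 f))
          (sel ((Finset.range (a+b+c+1) \ p.2) \ p.1) f)))
    else 0

lemma disj_main {a b c : ℕ} {T U : Finset ℕ}
    (hT : T ⊆ Finset.range (a+b+c+1)) (hTc : T.card = c+1)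
    (hU : U ⊆ Finset.range (a+b+1)) (hUc : U.card = b+1) (h0 : 0 ∉ U)
    {D D' D'' : (ℕ → A) → A}
    (hD : IsAltDeriv (a+1) D) (hD' : IsAltDeriv (b+1) D') (hD'' : IsAltDeriv (c+1) D'')
    (f : ℕ → A) :
    fwdB (a+b+c+1) T U ∈ (Finset.range (a+b+c+1)).powersetCard (b+1)
    ∧ Disjoint (fwdB (a+b+c+1) T U) T
    ∧ bwdU2 (a+b+c+1) (fwdB (a+b+c+1) T U) T = U
    ∧ (eps (c+1) T * eps (b+1) U) •
        D (cons (D' (sel U (cons (D'' (sel T f)) (sel (Finset.range (a+b+c+1) \ T) f))))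
          (sel (Finset.range (a+b+1) \ U)
            (cons (D'' (sel T f)) (sel (Finset.range (a+b+c+1) \ T) f))))
      = deltaSign b c (fwdB (a+b+c+1) T U) T •
        D (cons (D' (sel (fwdB (a+b+c+1) T U) f)) (cons (D'' (sel T f))
          (sel ((Finset.range (a+b+c+1) \ T) \ fwdB (a+b+c+1) T U) f))) := by
  set N := a+b+c+1 with hN
  set Tc : Finset ℕ := Finset.range N \ T with hTcdef
  have hTcCard : Tc.card = a + b := by
    rw [hTcdef, Finset.card_sdiff_of_subset hT, Finset.card_range, hTc]; omega
  set B : Finset ℕ := fwdB N T U with hBdef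
  have hBim : B = U.image (hshiftF N T) := rfl
  have hUe : ∀ u ∈ U, 1 ≤ u ∧ u < a+b+1 := by
    intro u hu
    have h1 := Finset.mem_range.1 (hU hu)
    have h2 : u ≠ 0 := fun hc => h0 (hc ▸ hu)
    omega
  have hsMono : ∀ u ∈ U, ∀ u' ∈ U, u < u' → hshiftF N T u < hshiftF N T u' := by
    intro u hu u' hu' huu
    have h1 := hUe u hu
    have h2 := hUe u' hu'
    exact nth_lt_nth (S := Tc) (by omega) (by omega)
  have hBinj : Set.InjOn (hshiftF N T) ↑U := by
    intro u hu u' hu' huu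
    have hu1 := Finset.mem_coe.1 hu
    have hu2 := Finset.mem_coe.1 hu'
    rcases lt_trichotomy u u' with h'|h'|h'
    · exact absurd huu (ne_of_lt (hsMono u hu1 u' hu2 h'))
    · exact h'
    · exact absurd huu.symm (ne_of_lt (hsMono u' hu2 u hu1 h'))
  have hBsub : B ⊆ Tc := by
    intro x hx
    rw [hBim] at hx
    obtain ⟨u, hu, rfl⟩ := Finset.mem_image.1 hx
    have h1 := hUe u hu
    exact nth_mem (by omega)
  have hBcard : B.card = b + 1 := by
    rw [hBim, Finset.card_image_of_injOn hBinj, hUc]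
  have hdisjBT : Disjoint B T := by
    rw [Finset.disjoint_left]
    intro x hx
    exact (Finset.mem_sdiff.1 (hBsub hx)).2
  have hrinj : Set.InjOn (fun x => rank Tc x + 1) ↑B := by
    intro x hx y hy hxy
    have hxy' : rank Tc x + 1 = rank Tc y + 1 := hxy
    exact rank_injOn (hBsub (Finset.mem_coe.1 hx)) (hBsub (Finset.mem_coe.1 hy))
      (by omega)
  have hUim : U = B.image (fun x => rank Tc x + 1) := by
    apply Finset.eq_of_subset_of_card_le
    · intro u hu
      have h1 := hUe u hu
      refine Finset.mem_image.2 ⟨hshiftF N T u, Finset.mem_image_of_mem _ hu, ?_⟩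
      rw [hshiftF, rank_nth (by omega)]
      omega
    · rw [Finset.card_image_of_injOn hrinj, hBcard, hUc]
  have hbU : bwdU2 N B T = U := by
    rw [bwdU2, ← hTcdef, ← hUim]
  -- X5'
  have hX5 : Finset.range (a+b+1) \ U
      = insert 0 (((Tc \ B).image (rank Tc)).image (· + 1)) := by
    conv_lhs => rw [hUim]
    have h1 : B.image (fun x => rank Tc x + 1) = (B.image (rank Tc)).image (· + 1) := by
      ext z
      simp only [Finset.mem_image]
      constructor
      · rintro ⟨x, hx, rfl⟩; exact ⟨rank Tc x, ⟨x, hx, rfl⟩, rfl⟩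
      · rintro ⟨y, ⟨x, hx, rfl⟩, rfl⟩; exact ⟨x, hx, rfl⟩
    rw [h1, show a+b+1 = (a+b)+1 from rfl, range_succ_sdiff_shift']
    congr 2
    rw [← hTcCard, image_rank_sdiff hBsub]
  refine ⟨Finset.mem_powersetCard.2 ⟨fun x hx => (Finset.mem_sdiff.1 (hBsub hx)).1,
    hBcard⟩, hdisjBT, hbU, ?_⟩
  -- sign
  have hsum_rank : ∀ x ∈ B, rank Tc x + #(T.filter (· < x)) = x := by
    intro x hx
    have h1 := Finset.mem_sdiff.1 (hBsub hx)
    rw [hTcdef]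
    exact rank_sdiff_add (Finset.mem_range.1 h1.1)
  have he1 : (∑ u ∈ U, u) + cross T B = (∑ x ∈ B, x) + (b+1) := by
    have h3 : (∑ x ∈ B, rank Tc x) + (∑ x ∈ B, #(T.filter (· < x)))
        = ∑ x ∈ B, x := by
      rw [← Finset.sum_add_distrib]
      exact Finset.sum_congr rfl hsum_rank
    have h2 : (∑ u ∈ U, u) = ∑ x ∈ B, (rank Tc x + 1) := by
      conv_lhs => rw [hUim]
      rw [Finset.sum_image (fun x hx y hy hxy =>
        rank_injOn (hBsub hx) (hBsub hy) (by omega))]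
    rw [h2, Finset.sum_add_distrib, Finset.sum_const, smul_eq_mul, mul_one, hBcard,
      cross]
    omega
  have hsign : eps (c+1) T * eps (b+1) U = deltaSign b c B T := by
    rw [eps, eps, deltaSign, ← pow_add]
    apply npow_eq
    omega
  rw [hsign]
  congr 1
  apply hD.depends
  intro t ht
  rcases t with _|t
  · rw [cons_zero, cons_zero]
    apply hD'.depends
    intro m hm
    rw [sel_apply, sel_apply]
    have hmem : nth U m ∈ U := nth_mem (by omega)
    have h1 := hUe _ hmem
    rw [show nth U m = (nth U m - 1) + 1 by omega, cons_succ, sel_apply]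
    rw [hBim, nth_image hsMono (by omega)]
    rfl
  · rw [cons_succ, cons_succ, sel_apply]
    have h0X : (0:ℕ) ∉ ((Tc \ B).image (rank Tc)).image (· + 1) := by
      rintro hc
      obtain ⟨y, _, hy⟩ := Finset.mem_image.1 hc
      omega
    rcases t with _|t
    · -- slot 1 : the D'' value
      rw [hX5, nth_zero_of_mem (Finset.mem_insert_self 0 _), cons_zero, cons_zero]
    · -- tail slots
      rw [cons_succ]
      have ha : 1 ≤ a := by
        have h1 : (B ∪ T).card = (b+1) + (c+1) := by
          rw [Finset.card_union_of_disjoint hdisjBT, hBcard, hTc]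
        have h2 : (B ∪ T) ⊆ Finset.range N := by
          intro x hx
          rcases Finset.mem_union.1 hx with h|h
          · exact (Finset.mem_sdiff.1 (hBsub h)).1
          · exact hT h
        have h3 := Finset.card_le_card h2
        rw [h1, Finset.card_range] at h3
        omega
      have hta : t < a - 1 := by omega
      have hcardTcB : (Tc \ B).card = a - 1 := by
        rw [Finset.card_sdiff_of_subset hBsub, hTcCard, hBcard]
        omega
      have hinjTcB : Set.InjOn (rank Tc) ↑(Tc \ B) := by
        intro x hx y hy hxy
        exact rank_injOn (Finset.mem_sdiff.1 (Finset.mem_coe.1 hx)).1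
          (Finset.mem_sdiff.1 (Finset.mem_coe.1 hy)).1 hxy
      have hcardimg : ((Tc \ B).image (rank Tc)).card = a - 1 := by
        rw [Finset.card_image_of_injOn hinjTcB, hcardTcB]
      have hnth : nth (Finset.range (a+b+1) \ U) (t+1)
          = rank Tc (nth (Tc \ B) t) + 1 := by
        rw [hX5, nth_insert_zero h0X]
        rw [nth_image (g := (· + 1)) (fun x _ y _ h => Nat.add_lt_add_right h 1)
          (by rw [hcardimg]; exact hta)]
        rw [nth_image (fun x hx y hy h =>
          rank_lt_rank (Finset.mem_sdiff.1 hx).1 h) (by rw [hcardTcB]; exact hta)]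
      rw [hnth, cons_succ, sel_apply, sel_apply,
        nth_rank (Finset.mem_sdiff.1 (nth_mem (S := Tc \ B) (by rw [hcardTcB]; exact hta))).1]

lemma disj_main2 {a b c : ℕ} {S' S'' : Finset ℕ}
    (hS' : S' ⊆ Finset.range (a+b+c+1)) (hS'c : S'.card = b+1)
    (hS'' : S'' ⊆ Finset.range (a+b+c+1)) (hS''c : S''.card = c+1)
    (hdisj : Disjoint S' S'') :
    bwdU2 (a+b+c+1) S' S'' ⊆ Finset.range (a+b+1)
    ∧ (bwdU2 (a+b+c+1) S' S'').card = b+1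
    ∧ 0 ∉ bwdU2 (a+b+c+1) S' S''
    ∧ fwdB (a+b+c+1) S'' (bwdU2 (a+b+c+1) S' S'') = S' := by
  set N := a+b+c+1 with hN
  set Tc : Finset ℕ := Finset.range N \ S'' with hTcdef
  have hTcCard : Tc.card = a + b := by
    rw [hTcdef, Finset.card_sdiff_of_subset hS'', Finset.card_range, hS''c]; omega
  have hS'Tc : S' ⊆ Tc := by
    intro x hx
    rw [hTcdef, Finset.mem_sdiff]
    exact ⟨hS' hx, Finset.disjoint_left.1 hdisj hx⟩
  have hrinj : Set.InjOn (fun x => rank Tc x + 1) ↑S' := by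
    intro x hx y hy hxy
    have hxy' : rank Tc x + 1 = rank Tc y + 1 := hxy
    exact rank_injOn (hS'Tc (Finset.mem_coe.1 hx)) (hS'Tc (Finset.mem_coe.1 hy))
      (by omega)
  have hUdef : bwdU2 N S' S'' = S'.image (fun x => rank Tc x + 1) := rfl
  refine ⟨?_, ?_, ?_, ?_⟩
  · intro u hu
    rw [hUdef] at hu
    obtain ⟨x, hx, rfl⟩ := Finset.mem_image.1 hu
    have := rank_lt_card (hS'Tc hx)
    rw [hTcCard] at this
    exact Finset.mem_range.2 (by omega)
  · rw [hUdef, Finset.card_image_of_injOn hrinj, hS'c]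
  · rw [hUdef]
    intro hc
    obtain ⟨x, _, hx⟩ := Finset.mem_image.1 hc
    omega
  · rw [hUdef, fwdB, Finset.image_image]
    ext z
    simp only [Finset.mem_image, Function.comp_apply]
    constructor
    · rintro ⟨x, hx, rfl⟩
      rw [hshiftF, show rank Tc x + 1 - 1 = rank Tc x by omega, ← hTcdef,
        nth_rank (hS'Tc hx)]
      exact hx
    · intro hz
      refine ⟨z, hz, ?_⟩
      rw [hshiftF, show rank Tc z + 1 - 1 = rank Tc z by omega, ← hTcdef,
        nth_rank (hS'Tc hz)]

end DisjDefs


section Assoc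
variable {A : Type*} [CommRing A] [Algebra ℝ A]

lemma nested_main2 {a b c : ℕ} {W R : Finset ℕ}
    (hW : W ⊆ Finset.range (a+b+c+1)) (hWc : W.card = b+c+1)
    (hR : R ⊆ Finset.range (b+c+1)) (hRc : R.card = c+1) :
    bwdT W R ∈ (Finset.range (a+b+c+1)).powersetCard (c+1)
    ∧ bwdU (a+b+c+1) W R ∈ (Finset.range (a+b+1)).powersetCard (b+1)
    ∧ 0 ∈ bwdU (a+b+c+1) W R
    ∧ fwdW (a+b+c+1) (bwdT W R) (bwdU (a+b+c+1) W R) = W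
    ∧ fwdR (a+b+c+1) (bwdT W R) (bwdU (a+b+c+1) W R) = R := by
  set N := a+b+c+1 with hN
  have hnthinj : Set.InjOn (nth W) ↑R := by
    intro x hx y hy hxy
    exact nth_injOn (by rw [hWc]; exact Finset.mem_range.1 (hR (Finset.mem_coe.1 hx)))
      (by rw [hWc]; exact Finset.mem_range.1 (hR (Finset.mem_coe.1 hy))) hxy
  set T : Finset ℕ := bwdT W R with hTdef
  have hTim : T = R.image (nth W) := rfl
  have hTW : T ⊆ W := by
    rw [hTim]
    intro x hx
    obtain ⟨r, hr, rfl⟩ := Finset.mem_image.1 hx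
    exact nth_mem (by rw [hWc]; exact Finset.mem_range.1 (hR hr))
  have hTcard : T.card = c + 1 := by
    rw [hTim, Finset.card_image_of_injOn hnthinj, hRc]
  have hTsub : T ⊆ Finset.range N := fun x hx => hW (hTW hx)
  set Tc : Finset ℕ := Finset.range N \ T with hTcdef
  have hTcCard : Tc.card = a + b := by
    rw [hTcdef, Finset.card_sdiff_of_subset hTsub, Finset.card_range, hTcard]; omega
  have hWTsub : W \ T ⊆ Tc := by
    intro x hx
    rw [Finset.mem_sdiff] at hx
    rw [hTcdef, Finset.mem_sdiff]
    exact ⟨hW hx.1, hx.2⟩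
  have hWTcard : (W \ T).card = b := by
    rw [Finset.card_sdiff_of_subset hTW, hWc, hTcard]; omega
  have hrinj : Set.InjOn (fun x => rank Tc x + 1) ↑(W \ T) := by
    intro x hx y hy hxy
    have hxy' : rank Tc x + 1 = rank Tc y + 1 := hxy
    exact rank_injOn (hWTsub (Finset.mem_coe.1 hx)) (hWTsub (Finset.mem_coe.1 hy))
      (by omega)
  have h0im : (0:ℕ) ∉ (W \ T).image (fun x => rank Tc x + 1) := by
    intro hc
    obtain ⟨x, _, hx⟩ := Finset.mem_image.1 hc
    omega
  set U : Finset ℕ := bwdU N W R with hUdef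
  have hUim : U = insert 0 ((W \ T).image (fun x => rank Tc x + 1)) := rfl
  have h0U : 0 ∈ U := by rw [hUim]; exact Finset.mem_insert_self 0 _
  have hUcard : U.card = b + 1 := by
    rw [hUim, Finset.card_insert_of_notMem h0im,
      Finset.card_image_of_injOn hrinj, hWTcard]
  have hUsub : U ⊆ Finset.range (a+b+1) := by
    rw [hUim]
    intro u hu
    rcases Finset.mem_insert.1 hu with rfl|hu
    · exact Finset.mem_range.2 (by omega)
    · obtain ⟨x, hx, rfl⟩ := Finset.mem_image.1 hu
      have := rank_lt_card (hWTsub hx)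
      rw [hTcCard] at this
      exact Finset.mem_range.2 (by omega)
  have hUerase : U.erase 0 = (W \ T).image (fun x => rank Tc x + 1) := by
    rw [hUim, Finset.erase_insert h0im]
  have hfwdW : fwdW N T U = W := by
    rw [fwdW, hUerase]
    have him : Finset.image (hshiftF N T) ((W \ T).image (fun x => rank Tc x + 1))
        = W \ T := by
      rw [Finset.image_image]
      ext z
      simp only [Finset.mem_image, Function.comp_apply]
      constructor
      · rintro ⟨x, hx, rfl⟩
        rw [hshiftF, show rank Tc x + 1 - 1 = rank Tc x by omega, ← hTcdef,
          nth_rank (hWTsub hx)]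
        exact hx
      · intro hz
        refine ⟨z, hz, ?_⟩
        rw [hshiftF, show rank Tc z + 1 - 1 = rank Tc z by omega, ← hTcdef,
          nth_rank (hWTsub hz)]
    rw [him, Finset.union_sdiff_of_subset hTW]
  have hfwdR : fwdR N T U = R := by
    rw [fwdR, hfwdW, hTim, Finset.image_image]
    ext z
    simp only [Finset.mem_image, Function.comp_apply]
    constructor
    · rintro ⟨r, hr, rfl⟩
      rw [rank_nth (by rw [hWc]; exact Finset.mem_range.1 (hR hr))]
      exact hr
    · intro hz
      exact ⟨z, hz, rank_nth (by rw [hWc]; exact Finset.mem_range.1 (hR hz))⟩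
  exact ⟨Finset.mem_powersetCard.2 ⟨hTsub, hTcard⟩,
    Finset.mem_powersetCard.2 ⟨hUsub, hUcard⟩, h0U, hfwdW, hfwdR⟩

theorem nested_sum_eq {a b c : ℕ} {D D' D'' : (ℕ → A) → A}
    (hD : IsAltDeriv (a+1) D) (hD' : IsAltDeriv (b+1) D') (hD'' : IsAltDeriv (c+1) D'')
    (f : ℕ → A) :
    ∑ p ∈ (Finset.range (a+b+c+1)).powersetCard (c+1) ×ˢ
        ((Finset.range (a+b+1)).powersetCard (b+1)).filter (fun U => 0 ∈ U),
      (eps (c+1) p.1 * eps (b+1) p.2) •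
        D (cons (D' (sel p.2 (cons (D'' (sel p.1 f))
            (sel (Finset.range (a+b+c+1) \ p.1) f))))
          (sel (Finset.range (a+b+1) \ p.2)
            (cons (D'' (sel p.1 f)) (sel (Finset.range (a+b+c+1) \ p.1) f))))
    = ∑ q ∈ (Finset.range (a+b+c+1)).powersetCard (b+c+1) ×ˢ
        (Finset.range (b+c+1)).powersetCard (c+1),
      (eps (b+c+1) q.1 * eps (c+1) q.2) •
        D (cons (D' (cons (D'' (sel q.2 (sel q.1 f)))
            (sel (Finset.range (b+c+1) \ q.2) (sel q.1 f))))
          (sel (Finset.range (a+b+c+1) \ q.1) f)) := by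
  refine Finset.sum_nbij'
    (fun p => (fwdW (a+b+c+1) p.1 p.2, fwdR (a+b+c+1) p.1 p.2))
    (fun q => (bwdT q.1 q.2, bwdU (a+b+c+1) q.1 q.2)) ?_ ?_ ?_ ?_ ?_
  · rintro ⟨T, U⟩ hp
    rw [Finset.mem_product, Finset.mem_filter, Finset.mem_powersetCard,
      Finset.mem_powersetCard] at hp
    obtain ⟨⟨hT, hTc⟩, ⟨hU, hUc⟩, h0⟩ := hp
    have h := nested_main hT hTc hU hUc h0 hD hD' hD'' f
    exact Finset.mem_product.2 ⟨h.1, h.2.1⟩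
  · rintro ⟨W, R⟩ hq
    rw [Finset.mem_product, Finset.mem_powersetCard, Finset.mem_powersetCard] at hq
    obtain ⟨⟨hW, hWc⟩, hR, hRc⟩ := hq
    have h := nested_main2 (a := a) hW hWc hR hRc
    rw [Finset.mem_product, Finset.mem_filter]
    exact ⟨h.1, h.2.1, h.2.2.1⟩
  · rintro ⟨T, U⟩ hp
    rw [Finset.mem_product, Finset.mem_filter, Finset.mem_powersetCard,
      Finset.mem_powersetCard] at hp
    obtain ⟨⟨hT, hTc⟩, ⟨hU, hUc⟩, h0⟩ := hp
    have h := nested_main hT hTc hU hUc h0 hD hD' hD'' f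
    exact Prod.ext h.2.2.1 h.2.2.2.1
  · rintro ⟨W, R⟩ hq
    rw [Finset.mem_product, Finset.mem_powersetCard, Finset.mem_powersetCard] at hq
    obtain ⟨⟨hW, hWc⟩, hR, hRc⟩ := hq
    have h := nested_main2 (a := a) hW hWc hR hRc
    exact Prod.ext h.2.2.2.1 h.2.2.2.2
  · rintro ⟨T, U⟩ hp
    rw [Finset.mem_product, Finset.mem_filter, Finset.mem_powersetCard,
      Finset.mem_powersetCard] at hp
    obtain ⟨⟨hT, hTc⟩, ⟨hU, hUc⟩, h0⟩ := hp
    exact (nested_main hT hTc hU hUc h0 hD hD' hD'' f).2.2.2.2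

theorem disj_sum_eq {a b c : ℕ} {D D' D'' : (ℕ → A) → A}
    (hD : IsAltDeriv (a+1) D) (hD' : IsAltDeriv (b+1) D') (hD'' : IsAltDeriv (c+1) D'')
    (f : ℕ → A) :
    ∑ p ∈ (Finset.range (a+b+c+1)).powersetCard (c+1) ×ˢ
        ((Finset.range (a+b+1)).powersetCard (b+1)).filter (fun U => 0 ∉ U),
      (eps (c+1) p.1 * eps (b+1) p.2) •
        D (cons (D' (sel p.2 (cons (D'' (sel p.1 f))
            (sel (Finset.range (a+b+c+1) \ p.1) f))))
          (sel (Finset.range (a+b+1) \ p.2)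
            (cons (D'' (sel p.1 f)) (sel (Finset.range (a+b+c+1) \ p.1) f))))
    = disj a b c D D' D'' f := by
  rw [disj, ← Finset.sum_filter]
  refine Finset.sum_nbij'
    (fun p => (fwdB (a+b+c+1) p.1 p.2, p.1))
    (fun q => (q.2, bwdU2 (a+b+c+1) q.1 q.2)) ?_ ?_ ?_ ?_ ?_
  · rintro ⟨T, U⟩ hp
    rw [Finset.mem_product, Finset.mem_filter, Finset.mem_powersetCard,
      Finset.mem_powersetCard] at hp
    obtain ⟨⟨hT, hTc⟩, ⟨hU, hUc⟩, h0⟩ := hp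
    have h := disj_main hT hTc hU hUc h0 hD hD' hD'' f
    rw [Finset.mem_filter, Finset.mem_product]
    exact ⟨⟨h.1, Finset.mem_powersetCard.2 ⟨hT, hTc⟩⟩, h.2.1⟩
  · rintro ⟨S', S''⟩ hq
    rw [Finset.mem_filter, Finset.mem_product, Finset.mem_powersetCard,
      Finset.mem_powersetCard] at hq
    obtain ⟨⟨⟨hS', hS'c⟩, hS'', hS''c⟩, hdisj⟩ := hq
    have h := disj_main2 hS' hS'c hS'' hS''c hdisj
    rw [Finset.mem_product, Finset.mem_filter]
    exact ⟨Finset.mem_powersetCard.2 ⟨hS'', hS''c⟩,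
      Finset.mem_powersetCard.2 ⟨h.1, h.2.1⟩, h.2.2.1⟩
  · rintro ⟨T, U⟩ hp
    rw [Finset.mem_product, Finset.mem_filter, Finset.mem_powersetCard,
      Finset.mem_powersetCard] at hp
    obtain ⟨⟨hT, hTc⟩, ⟨hU, hUc⟩, h0⟩ := hp
    have h := disj_main hT hTc hU hUc h0 hD hD' hD'' f
    exact Prod.ext rfl h.2.2.1
  · rintro ⟨S', S''⟩ hq
    rw [Finset.mem_filter, Finset.mem_product, Finset.mem_powersetCard,
      Finset.mem_powersetCard] at hq
    obtain ⟨⟨⟨hS', hS'c⟩, hS'', hS''c⟩, hdisj⟩ := hq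
    have h := disj_main2 hS' hS'c hS'' hS''c hdisj
    exact Prod.ext h.2.2.2 rfl
  · rintro ⟨T, U⟩ hp
    rw [Finset.mem_product, Finset.mem_filter, Finset.mem_powersetCard,
      Finset.mem_powersetCard] at hp
    obtain ⟨⟨hT, hTc⟩, ⟨hU, hUc⟩, h0⟩ := hp
    exact (disj_main hT hTc hU hUc h0 hD hD' hD'' f).2.2.2

theorem assoc_comp' {a b c : ℕ} {D D' D'' : (ℕ → A) → A}
    (hD : IsAltDeriv (a+1) D) (hD' : IsAltDeriv (b+1) D') (hD'' : IsAltDeriv (c+1) D'')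
    (f : ℕ → A) :
    comp' (a+b+1) (c+1) (comp' (a+1) (b+1) D D') D'' f
      = comp' (a+1) (b+c+1) D (comp' (b+1) (c+1) D' D'') f + disj a b c D D' D'' f := by
  have hi1 : (a+b+1) + (c+1) - 1 = a+b+c+1 := by omega
  have hi2 : (a+1) + (b+1) - 1 = a+b+1 := by omega
  have hi3 : (a+1) + (b+c+1) - 1 = a+b+c+1 := by omega
  have hi4 : (b+1) + (c+1) - 1 = b+c+1 := by omega
  simp only [comp', hi1, hi2, hi3, hi4, Finset.smul_sum, smul_smul]
  -- push the inner sum out of `D` on the RHS main term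
  have hpush : ∀ W ∈ (Finset.range (a+b+c+1)).powersetCard (b+c+1),
      eps (b+c+1) W • D (cons (∑ R ∈ (Finset.range (b+c+1)).powersetCard (c+1),
          eps (c+1) R • D' (cons (D'' (sel R (sel W f)))
            (sel (Finset.range (b+c+1) \ R) (sel W f))))
        (sel (Finset.range (a+b+c+1) \ W) f))
      = ∑ R ∈ (Finset.range (b+c+1)).powersetCard (c+1),
          (eps (b+c+1) W * eps (c+1) R) •
            D (cons (D' (cons (D'' (sel R (sel W f)))
              (sel (Finset.range (b+c+1) \ R) (sel W f))))
            (sel (Finset.range (a+b+c+1) \ W) f)) := by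
    intro W _
    have h1 : ∀ (x : A), D (cons x (sel (Finset.range (a+b+c+1) \ W) f))
        = consHom hD (Nat.succ_pos a) (sel (Finset.range (a+b+c+1) \ W) f) x :=
      fun x => rfl
    rw [h1, map_sum]
    rw [Finset.smul_sum]
    apply Finset.sum_congr rfl
    intro R _
    rw [map_zsmul, smul_smul, consHom_apply]
  rw [Finset.sum_congr rfl hpush]
  -- split the left double sum according to whether `0 ∈ U`
  have hsplit : ∀ T ∈ (Finset.range (a+b+c+1)).powersetCard (c+1),
      (∑ U ∈ (Finset.range (a+b+1)).powersetCard (b+1),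
        (eps (c+1) T * eps (b+1) U) •
          D (cons (D' (sel U (cons (D'' (sel T f))
              (sel (Finset.range (a+b+c+1) \ T) f))))
            (sel (Finset.range (a+b+1) \ U)
              (cons (D'' (sel T f)) (sel (Finset.range (a+b+c+1) \ T) f)))))
      = (∑ U ∈ ((Finset.range (a+b+1)).powersetCard (b+1)).filter (fun U => 0 ∈ U),
        (eps (c+1) T * eps (b+1) U) •
          D (cons (D' (sel U (cons (D'' (sel T f))
              (sel (Finset.range (a+b+c+1) \ T) f))))
            (sel (Finset.range (a+b+1) \ U)
              (cons (D'' (sel T f)) (sel (Finset.range (a+b+c+1) \ T) f)))))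
        + (∑ U ∈ ((Finset.range (a+b+1)).powersetCard (b+1)).filter (fun U => 0 ∉ U),
        (eps (c+1) T * eps (b+1) U) •
          D (cons (D' (sel U (cons (D'' (sel T f))
              (sel (Finset.range (a+b+c+1) \ T) f))))
            (sel (Finset.range (a+b+1) \ U)
              (cons (D'' (sel T f)) (sel (Finset.range (a+b+c+1) \ T) f))))) := by
    intro T _
    exact (Finset.sum_filter_add_sum_filter_not _ _ _).symm
  rw [Finset.sum_congr rfl hsplit, Finset.sum_add_distrib]
  congr 1
  · rw [← Finset.sum_product', ← Finset.sum_product']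
    exact nested_sum_eq hD hD' hD'' f
  · rw [← Finset.sum_product']
    exact disj_sum_eq hD hD' hD'' f

end Assoc

section Swap
variable {A : Type*} [CommRing A] [Algebra ℝ A]

theorem disj_swap {a b c : ℕ} {D D' D'' : (ℕ → A) → A}
    (hD : IsAltDeriv (a+1) D) (f : ℕ → A) :
    disj a b c D D' D'' f = ((-1:ℤ)^(b*c)) • disj a c b D D'' D' f := by
  have hidx : a+c+b+1 = a+b+c+1 := by omega
  rw [disj, disj, hidx, Finset.smul_sum]
  refine Finset.sum_nbij' Prod.swap Prod.swap ?_ ?_ ?_ ?_ ?_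
  · rintro ⟨S', S''⟩ hp
    rw [Finset.mem_product] at hp ⊢
    exact ⟨hp.2, hp.1⟩
  · rintro ⟨S'', S'⟩ hq
    rw [Finset.mem_product] at hq ⊢
    exact ⟨hq.2, hq.1⟩
  · rintro ⟨S', S''⟩ _; rfl
  · rintro ⟨S'', S'⟩ _; rfl
  · rintro ⟨S', S''⟩ hp
    rw [Finset.mem_product, Finset.mem_powersetCard, Finset.mem_powersetCard] at hp
    obtain ⟨⟨hS', hS'c⟩, hS'', hS''c⟩ := hp
    simp only [Prod.swap_prod_mk]
    by_cases hdisj : Disjoint S' S''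
    · rw [if_pos hdisj, if_pos (show Disjoint S'' S' from hdisj.symm)]
      have ha : 1 ≤ a := by
        have h1 : (S' ∪ S'').card = (b+1) + (c+1) :=
          (Finset.card_union_of_disjoint hdisj).trans (by rw [hS'c, hS''c])
        have h2 : S' ∪ S'' ⊆ Finset.range (a+b+c+1) := Finset.union_subset hS' hS''
        have h3 := Finset.card_le_card h2
        rw [h1, Finset.card_range] at h3
        omega
      have htail : ((Finset.range (a+b+c+1) \ S'') \ S')
          = ((Finset.range (a+b+c+1) \ S') \ S'') := by
        ext x
        simp only [Finset.mem_sdiff]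
        tauto
      rw [htail]
      have hanti := D_antisym hD (by omega) (D' (sel S' f)) (D'' (sel S'' f))
        (sel ((Finset.range (a+b+c+1) \ S') \ S'') f)
      rw [hanti, smul_neg, ← neg_smul, smul_smul]
      congr 1
      -- sign identity
      rw [deltaSign, deltaSign, ← pow_add]
      rw [show (-(-1:ℤ)^((∑ i ∈ S', i) + (∑ i ∈ S'', i) + tri (b+1) + tri (c+1)
          + (b+1) + cross S'' S'))
        = (-1:ℤ)^(((∑ i ∈ S', i) + (∑ i ∈ S'', i) + tri (b+1) + tri (c+1)
          + (b+1) + cross S'' S') + 1) from by rw [pow_succ]; ring]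
      apply npow_eq
      have hc1 : cross S'' S' + cross S' S'' = (c+1) * (b+1) :=
        cross_comm_add hdisj.symm |>.trans (by rw [hS''c, hS'c])
      have hp1 : (c+1) * (b+1) = b*c + b + c + 1 := by ring
      omega
    · rw [if_neg hdisj, if_neg (fun hc : Disjoint S'' S' => hdisj hc.symm), smul_zero]

lemma nth_junk {S : Finset ℕ} {m : ℕ} (h : S.card ≤ m) : nth S m = 0 := by
  rw [nth, List.getD_eq_default]
  rw [Finset.length_sort]
  exact h

lemma sel_eq_sel {N : ℕ} {S : Finset ℕ} (hS : S ⊆ Finset.range N) (hN : 0 < N)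
    {f g : ℕ → A} (h : ∀ i < N, f i = g i) : sel S f = sel S g := by
  funext m
  rcases lt_or_ge m S.card with hm|hm
  · exact h _ (Finset.mem_range.1 (hS (nth_mem hm)))
  · rw [sel_apply, sel_apply, nth_junk hm]
    exact h 0 hN

lemma dep_comp' {k k' : ℕ} (hk : 1 ≤ k) (hk' : 1 ≤ k') (D D' : (ℕ → A) → A) :
    Dep (k + k' - 1) (comp' k k' D D') := by
  intro f g hfg
  rw [comp', comp']
  apply Finset.sum_congr rfl
  intro S hS
  rw [Finset.mem_powersetCard] at hS
  have hN : 0 < k + k' - 1 := by omega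
  rw [sel_eq_sel hS.1 hN hfg, sel_eq_sel Finset.sdiff_subset hN hfg]

lemma comp'_left_sub {k k' : ℕ} (X Y D' : (ℕ → A) → A) (z : ℤ) (f : ℕ → A) :
    comp' k k' (fun g => X g - z • Y g) D' f
      = comp' k k' X D' f - z • comp' k k' Y D' f := by
  rw [comp', comp', comp', Finset.smul_sum, ← Finset.sum_sub_distrib]
  apply Finset.sum_congr rfl
  intro S _
  rw [smul_sub, smul_comm]

lemma comp'_right_sub {k k' : ℕ} {D : (ℕ → A) → A} (hD : IsAltDeriv k D) (hk : 0 < k)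
    (X Y : (ℕ → A) → A) (z : ℤ) (f : ℕ → A) :
    comp' k k' D (fun g => X g - z • Y g) f
      = comp' k k' D X f - z • comp' k k' D Y f := by
  rw [comp', comp', comp', Finset.smul_sum, ← Finset.sum_sub_distrib]
  apply Finset.sum_congr rfl
  intro S _
  have h1 : ∀ (x : A), D (cons x (sel (Finset.range (k + k' - 1) \ S) f))
      = consHom hD hk (sel (Finset.range (k + k' - 1) \ S) f) x := fun x => rfl
  rw [h1, map_sub, map_zsmul, h1, h1, smul_sub, smul_comm]

end Swap

end AltJacobi


/-- **Generalized Jacobi identity** for the graded bracket of alternating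
multiderivations: for `D` `k`-alternating, `D'` `k'`-alternating and `D''`
`k''`-alternating,
`(−1)^{(k−1)(k''−1)} [[D,D'],D''] + (−1)^{(k'−1)(k−1)} [[D',D''],D]
 + (−1)^{(k''−1)(k'−1)} [[D'',D],D'] = 0`. -/
theorem altBracket_generalized_jacobi {A : Type*} [CommRing A] [Algebra ℝ A]
    (k k' k'' : ℕ) (hk : 1 ≤ k) (hk' : 1 ≤ k') (hk'' : 1 ≤ k'')
    (D D' D'' : (ℕ → A) → A)
    (hD : IsAltDeriv k D) (hD' : IsAltDeriv k' D') (hD'' : IsAltDeriv k'' D'') :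
    ∀ f : ℕ → A,
      ((-1 : ℤ) ^ ((k - 1) * (k'' - 1))) •
          altBracket (k + k' - 1) k'' (altBracket k k' D D') D'' f
        + ((-1 : ℤ) ^ ((k' - 1) * (k - 1))) •
            altBracket (k' + k'' - 1) k (altBracket k' k'' D' D'') D f
        + ((-1 : ℤ) ^ ((k'' - 1) * (k' - 1))) •
            altBracket (k'' + k - 1) k' (altBracket k'' k D'' D) D' f = 0 := by
  obtain ⟨a, rfl⟩ : ∃ a, k = a + 1 := ⟨k - 1, by omega⟩
  obtain ⟨b, rfl⟩ : ∃ b, k' = b + 1 := ⟨k' - 1, by omega⟩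
  obtain ⟨c, rfl⟩ : ∃ c, k'' = c + 1 := ⟨k'' - 1, by omega⟩
  intro f
  open AltJacobi in
  have hE1 : altBracket (a+1) (b+1) D D'
      = (fun g => comp' (a+1) (b+1) D D' g
          - ((-1:ℤ)^(a*b)) • comp' (b+1) (a+1) D' D g) := by
    funext g
    simp only [altBracket, Nat.add_sub_cancel]
    rw [altComp_eq_comp' (by omega) (by omega) D D' hD.depends hD'.depends g,
      altComp_eq_comp' (by omega) (by omega) D' D hD'.depends hD.depends g]
  open AltJacobi in
  have hE2 : altBracket (b+1) (c+1) D' D''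
      = (fun g => comp' (b+1) (c+1) D' D'' g
          - ((-1:ℤ)^(b*c)) • comp' (c+1) (b+1) D'' D' g) := by
    funext g
    simp only [altBracket, Nat.add_sub_cancel]
    rw [altComp_eq_comp' (by omega) (by omega) D' D'' hD'.depends hD''.depends g,
      altComp_eq_comp' (by omega) (by omega) D'' D' hD''.depends hD'.depends g]
  open AltJacobi in
  have hE3 : altBracket (c+1) (a+1) D'' D
      = (fun g => comp' (c+1) (a+1) D'' D g
          - ((-1:ℤ)^(c*a)) • comp' (a+1) (c+1) D D'' g) := by
    funext g
    simp only [altBracket, Nat.add_sub_cancel]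
    rw [altComp_eq_comp' (by omega) (by omega) D'' D hD''.depends hD.depends g,
      altComp_eq_comp' (by omega) (by omega) D D'' hD.depends hD''.depends g]
  open AltJacobi in
  have hdep1 : Dep (a+b+1) (fun g => comp' (a+1) (b+1) D D' g
      - ((-1:ℤ)^(a*b)) • comp' (b+1) (a+1) D' D g) := by
    intro u v huv
    simp only
    rw [dep_comp' (k := a+1) (k' := b+1) (by omega) (by omega) D D' u v
        (fun i hi => huv i (by omega)),
      dep_comp' (k := b+1) (k' := a+1) (by omega) (by omega) D' D u v
        (fun i hi => huv i (by omega))]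
  open AltJacobi in
  have hdep2 : Dep (b+c+1) (fun g => comp' (b+1) (c+1) D' D'' g
      - ((-1:ℤ)^(b*c)) • comp' (c+1) (b+1) D'' D' g) := by
    intro u v huv
    simp only
    rw [dep_comp' (k := b+1) (k' := c+1) (by omega) (by omega) D' D'' u v
        (fun i hi => huv i (by omega)),
      dep_comp' (k := c+1) (k' := b+1) (by omega) (by omega) D'' D' u v
        (fun i hi => huv i (by omega))]
  open AltJacobi in
  have hdep3 : Dep (c+a+1) (fun g => comp' (c+1) (a+1) D'' D g
      - ((-1:ℤ)^(c*a)) • comp' (a+1) (c+1) D D'' g) := by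
    intro u v huv
    simp only
    rw [dep_comp' (k := c+1) (k' := a+1) (by omega) (by omega) D'' D u v
        (fun i hi => huv i (by omega)),
      dep_comp' (k := a+1) (k' := c+1) (by omega) (by omega) D D'' u v
        (fun i hi => huv i (by omega))]
  open AltJacobi in
  have hB1 : altBracket (a+b+1) (c+1) (altBracket (a+1) (b+1) D D') D'' f
      = comp' (a+b+1) (c+1) (comp' (a+1) (b+1) D D') D'' f
        - ((-1:ℤ)^(a*b)) • comp' (a+b+1) (c+1) (comp' (b+1) (a+1) D' D) D'' f
        - ((-1:ℤ)^((a+b)*c)) •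
            (comp' (c+1) (a+b+1) D'' (comp' (a+1) (b+1) D D') f
              - ((-1:ℤ)^(a*b)) • comp' (c+1) (a+b+1) D'' (comp' (b+1) (a+1) D' D) f) := by
    rw [hE1]
    simp only [altBracket, Nat.add_sub_cancel]
    rw [altComp_eq_comp' (by omega) (by omega) _ D'' hdep1 hD''.depends f,
      altComp_eq_comp' (by omega) (by omega) D'' _ hD''.depends hdep1 f,
      comp'_left_sub, comp'_right_sub hD'' (by omega)]
  open AltJacobi in
  have hB2 : altBracket (b+c+1) (a+1) (altBracket (b+1) (c+1) D' D'') D f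
      = comp' (b+c+1) (a+1) (comp' (b+1) (c+1) D' D'') D f
        - ((-1:ℤ)^(b*c)) • comp' (b+c+1) (a+1) (comp' (c+1) (b+1) D'' D') D f
        - ((-1:ℤ)^((b+c)*a)) •
            (comp' (a+1) (b+c+1) D (comp' (b+1) (c+1) D' D'') f
              - ((-1:ℤ)^(b*c)) • comp' (a+1) (b+c+1) D (comp' (c+1) (b+1) D'' D') f) := by
    rw [hE2]
    simp only [altBracket, Nat.add_sub_cancel]
    rw [altComp_eq_comp' (by omega) (by omega) _ D hdep2 hD.depends f,
      altComp_eq_comp' (by omega) (by omega) D _ hD.depends hdep2 f,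
      comp'_left_sub, comp'_right_sub hD (by omega)]
  open AltJacobi in
  have hB3 : altBracket (c+a+1) (b+1) (altBracket (c+1) (a+1) D'' D) D' f
      = comp' (c+a+1) (b+1) (comp' (c+1) (a+1) D'' D) D' f
        - ((-1:ℤ)^(c*a)) • comp' (c+a+1) (b+1) (comp' (a+1) (c+1) D D'') D' f
        - ((-1:ℤ)^((c+a)*b)) •
            (comp' (b+1) (c+a+1) D' (comp' (c+1) (a+1) D'' D) f
              - ((-1:ℤ)^(c*a)) • comp' (b+1) (c+a+1) D' (comp' (a+1) (c+1) D D'') f) := by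
    rw [hE3]
    simp only [altBracket, Nat.add_sub_cancel]
    rw [altComp_eq_comp' (by omega) (by omega) _ D' hdep3 hD'.depends f,
      altComp_eq_comp' (by omega) (by omega) D' _ hD'.depends hdep3 f,
      comp'_left_sub, comp'_right_sub hD' (by omega)]
  -- associator substitutions
  open AltJacobi in
  have hC1 : comp' (a+b+1) (c+1) (comp' (a+1) (b+1) D D') D'' f
      = comp' (a+1) (b+c+1) D (comp' (b+1) (c+1) D' D'') f
        + disj a b c D D' D'' f := assoc_comp' hD hD' hD'' f
  open AltJacobi in
  have hC2 : comp' (a+b+1) (c+1) (comp' (b+1) (a+1) D' D) D'' f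
      = comp' (b+1) (c+a+1) D' (comp' (a+1) (c+1) D D'') f
        + disj b a c D' D D'' f := by
    rw [show a+b+1 = b+a+1 from by omega, show c+a+1 = a+c+1 from by omega]
    exact assoc_comp' hD' hD hD'' f
  open AltJacobi in
  have hC5 : comp' (b+c+1) (a+1) (comp' (b+1) (c+1) D' D'') D f
      = comp' (b+1) (c+a+1) D' (comp' (c+1) (a+1) D'' D) f
        + disj b c a D' D'' D f := assoc_comp' hD' hD'' hD f
  open AltJacobi in
  have hC6 : comp' (b+c+1) (a+1) (comp' (c+1) (b+1) D'' D') D f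
      = comp' (c+1) (a+b+1) D'' (comp' (b+1) (a+1) D' D) f
        + disj c b a D'' D' D f := by
    rw [show b+c+1 = c+b+1 from by omega, show a+b+1 = b+a+1 from by omega]
    exact assoc_comp' hD'' hD' hD f
  open AltJacobi in
  have hC9 : comp' (c+a+1) (b+1) (comp' (c+1) (a+1) D'' D) D' f
      = comp' (c+1) (a+b+1) D'' (comp' (a+1) (b+1) D D') f
        + disj c a b D'' D D' f := assoc_comp' hD'' hD hD' f
  open AltJacobi in
  have hC10 : comp' (c+a+1) (b+1) (comp' (a+1) (c+1) D D'') D' f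
      = comp' (a+1) (b+c+1) D (comp' (c+1) (b+1) D'' D') f
        + disj a c b D D'' D' f := by
    rw [show c+a+1 = a+c+1 from by omega, show b+c+1 = c+b+1 from by omega]
    exact assoc_comp' hD hD'' hD' f
  -- normalize the indices in the goal and substitute
  rw [show (a+1) + (b+1) - 1 = a+b+1 from by omega,
    show (b+1) + (c+1) - 1 = b+c+1 from by omega,
    show (c+1) + (a+1) - 1 = c+a+1 from by omega,
    Nat.add_sub_cancel, Nat.add_sub_cancel, Nat.add_sub_cancel,
    hB1, hB2, hB3, hC1, hC2, hC5, hC6, hC9, hC10]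
  open AltJacobi in
  rw [disj_swap hD f, disj_swap hD' f, disj_swap hD'' f]
  -- normalize the sign exponents
  rw [show ((-1:ℤ))^((a+b)*c) = (-1)^(a*c) * (-1)^(b*c) from by
      rw [← pow_add]; congr 1; ring,
    show ((-1:ℤ))^((b+c)*a) = (-1)^(a*b) * (-1)^(a*c) from by
      rw [← pow_add]; congr 1; ring,
    show ((-1:ℤ))^((c+a)*b) = (-1)^(a*b) * (-1)^(b*c) from by
      rw [← pow_add]; congr 1; ring]
  simp only [show b*a = a*b from Nat.mul_comm b a, show c*a = a*c from Nat.mul_comm c a,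
    show c*b = b*c from Nat.mul_comm c b]
  rcases Nat.even_or_odd (a*b) with h1|h1 <;>
    rcases Nat.even_or_odd (a*c) with h2|h2 <;>
      rcases Nat.even_or_odd (b*c) with h3|h3 <;>
        simp only [h1.neg_one_pow, h2.neg_one_pow, h3.neg_one_pow] <;>
          module
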